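/- arXiv:2311.18669 — 3 statements merged into one kernel-verified Lean document; each statement's English description precedes it below -/
import Mathlib

section
/- Let w : [0,1] → ℝ be continuous and let φ_H be as above. Define κ_∞^{(w)}(H) = ∫_0^1 ∫_0^1 w(x) w(y) φ_H(x-y) dx dy and, for an integer p ≥ 1, κ_p^{(w)}(H) = p^{-2} ∑_{ℓ₁=0}^{p-1} ∑_{ℓ₂=0}^{p-1} w(ℓ₁/p) w(ℓ₂/p) φ_H((ℓ₁-ℓ₂)/p). If w is Lipschitz continuous, then there exists c > 0, depending only on w and a compact interval [H_-, H_+] ⊂ (0,1), such that |κ_p^{(w)}(H) - κ_∞^{(w)}(H)| ≤ c · p^{-min(2H,1)} for all p ≥ 1 and all H ∈ [H_-, H_+]. -/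
/-- The autocovariance kernel of second-order increments of fBM. -/
noncomputable def phiH (H x : ℝ) : ℝ :=
  (1 / 2) * ∑ k ∈ Finset.range 5,
    (-1 : ℝ) ^ (k + 1) * (Nat.choose 4 k : ℝ) * |x + (k : ℝ) - 2| ^ (2 * H)

/-- Riemann-sum version of the energy constant. -/
noncomputable def kappaP (w : ℝ → ℝ) (p : ℕ) (H : ℝ) : ℝ :=
  ((p : ℝ) ^ 2)⁻¹ * ∑ l1 ∈ Finset.range p, ∑ l2 ∈ Finset.range p,
    w ((l1 : ℝ) / p) * w ((l2 : ℝ) / p) * phiH H (((l1 : ℝ) - (l2 : ℝ)) / p)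

/-- Limiting energy constant. -/
noncomputable def kappaInf (w : ℝ → ℝ) (H : ℝ) : ℝ :=
  ∫ x in (0 : ℝ)..1, ∫ y in (0 : ℝ)..1, w x * w y * phiH H (x - y)



lemma my_rpow_sub_le {s a b : ℝ} (hs0 : 0 < s) (hs1 : s ≤ 1) (hb : 0 ≤ b) (hba : b ≤ a) :
    a ^ s - b ^ s ≤ (a - b) ^ s := by
  have h := NNReal.rpow_add_le_add_rpow ((a - b).toNNReal) (b.toNNReal) hs0.le hs1
  have hab : (a - b).toNNReal + b.toNNReal = a.toNNReal := by
    rw [← Real.toNNReal_add (by linarith) hb]; norm_num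
  rw [hab] at h
  have h2 := NNReal.coe_le_coe.2 h
  push_cast [NNReal.coe_rpow, Real.coe_toNNReal _ (by linarith : (0:ℝ) ≤ a),
    Real.coe_toNNReal _ (by linarith : (0:ℝ) ≤ a - b), Real.coe_toNNReal _ hb] at h2
  linarith

lemma my_rpow_lip {s a b : ℝ} (hs1 : 1 ≤ s) (hs2 : s ≤ 2) (hb : 0 ≤ b) (hba : b ≤ a)
    (ha : a ≤ 3) : a ^ s - b ^ s ≤ 6 * (a - b) := by
  have key : ∀ t ∈ Set.Icc b a,
      HasDerivWithinAt (fun x : ℝ => x ^ s) (s * t ^ (s - 1)) (Set.Icc b a) t :=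
    fun t _ => (Real.hasDerivAt_rpow_const (Or.inr hs1)).hasDerivWithinAt
  have bound : ∀ t ∈ Set.Icc b a, ‖s * t ^ (s - 1)‖ ≤ 6 := by
    intro t ht
    have ht0 : 0 ≤ t := le_trans hb ht.1
    have h1 : t ^ (s - 1) ≤ 3 := by
      calc t ^ (s - 1) ≤ 3 ^ (s - 1) :=
            Real.rpow_le_rpow ht0 (le_trans ht.2 ha) (by linarith)
        _ ≤ 3 ^ (1 : ℝ) := Real.rpow_le_rpow_of_exponent_le (by norm_num) (by linarith)
        _ = 3 := Real.rpow_one 3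
    have h0 : 0 ≤ t ^ (s - 1) := Real.rpow_nonneg ht0 _
    rw [Real.norm_eq_abs, abs_mul, abs_of_nonneg (by linarith : (0:ℝ) ≤ s), abs_of_nonneg h0]
    nlinarith
  have h := (convex_Icc b a).norm_image_sub_le_of_norm_hasDerivWithin_le key bound
      (Set.left_mem_Icc.2 hba) (Set.right_mem_Icc.2 hba)
  rw [Real.norm_eq_abs, Real.norm_eq_abs] at h
  calc a ^ s - b ^ s ≤ |a ^ s - b ^ s| := le_abs_self _
    _ ≤ 6 * |a - b| := h
    _ = 6 * (a - b) := by rw [abs_of_nonneg (by linarith)]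

lemma my_abs_rpow_holder {s u v : ℝ} (hs0 : 0 < s) (hs2 : s ≤ 2)
    (hu : |u| ≤ 3) (hv : |v| ≤ 3) :
    abs (|u| ^ s - |v| ^ s) ≤ 6 * |u - v| ^ min s 1 := by
  wlog h : |v| ≤ |u| generalizing u v
  · have h2 := this hv hu (le_of_not_ge h)
    rw [abs_sub_comm u v]
    rwa [abs_sub_comm] at h2
  have hd : |u| - |v| ≤ |u - v| := le_trans (le_abs_self _) (abs_abs_sub_abs_le_abs_sub u v)
  have huv0 : (0:ℝ) ≤ |u - v| := abs_nonneg _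
  have hnn : 0 ≤ |u| ^ s - |v| ^ s :=
    sub_nonneg.2 (Real.rpow_le_rpow (abs_nonneg _) h hs0.le)
  rw [abs_of_nonneg hnn]
  rcases le_total s 1 with hs1 | hs1
  · rw [min_eq_left hs1]
    have h1 : 0 ≤ |u| - |v| := by linarith
    calc |u| ^ s - |v| ^ s ≤ (|u| - |v|) ^ s := my_rpow_sub_le hs0 hs1 (abs_nonneg _) h
      _ ≤ |u - v| ^ s := Real.rpow_le_rpow h1 hd hs0.le
      _ ≤ 6 * |u - v| ^ s := by nlinarith [Real.rpow_nonneg huv0 s]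
  · rw [min_eq_right hs1, Real.rpow_one]
    calc |u| ^ s - |v| ^ s ≤ 6 * (|u| - |v|) := my_rpow_lip hs1 hs2 (abs_nonneg _) h hu
      _ ≤ 6 * |u - v| := by linarith

lemma my_le_rpow_self {t α : ℝ} (ht0 : 0 ≤ t) (ht1 : t ≤ 1) (hα0 : 0 < α) (hα1 : α ≤ 1) :
    t ≤ t ^ α := by
  rcases eq_or_lt_of_le ht0 with h | h
  · simp [← h, Real.zero_rpow hα0.ne']
  · calc t = t ^ (1:ℝ) := (Real.rpow_one t).symm
      _ ≤ t ^ α := Real.rpow_le_rpow_of_exponent_ge h ht1 hα1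

lemma phiH_eq (H x : ℝ) : phiH H x =
    (1 / 2) * (-(|x - 2| ^ (2 * H)) + 4 * |x - 1| ^ (2 * H) - 6 * |x| ^ (2 * H)
      + 4 * |x + 1| ^ (2 * H) - |x + 2| ^ (2 * H)) := by
  simp only [phiH, Finset.sum_range_succ, Finset.sum_range_zero]
  norm_num [Nat.choose]
  ring_nf

lemma phiH_cont {H : ℝ} (hH : 0 < H) : Continuous (phiH H) := by
  unfold phiH
  refine continuous_const.mul (continuous_finset_sum _ fun k _ => continuous_const.mul ?_)
  have h : Continuous fun x : ℝ => |x + (k:ℝ) - 2| := by continuity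
  exact h.rpow_const fun x => Or.inr (by positivity)

lemma phiH_holder {H a b : ℝ} (hH0 : 0 < H) (hH1 : H ≤ 1) (ha : |a| ≤ 1) (hb : |b| ≤ 1) :
    |phiH H a - phiH H b| ≤ 48 * |a - b| ^ min (2 * H) 1 := by
  have hs0 : 0 < 2 * H := by linarith
  have hs2 : 2 * H ≤ 2 := by linarith
  set d := |a - b| ^ min (2 * H) 1 with hd
  have key : ∀ c : ℝ, |c| ≤ 2 → abs ((|a + c|) ^ (2 * H) - (|b + c|) ^ (2 * H)) ≤ 6 * d := by
    intro c hc
    have h1 : |a + c| ≤ 3 := (abs_add_le a c).trans (by linarith)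
    have h2 : |b + c| ≤ 3 := (abs_add_le b c).trans (by linarith)
    have h3 := my_abs_rpow_holder hs0 hs2 h1 h2
    have h4 : a + c - (b + c) = a - b := by ring
    rwa [h4] at h3
  have k0 := key (-2) (by norm_num)
  have k1 := key (-1) (by norm_num)
  have k2 := key 0 (by norm_num)
  have k3 := key 1 (by norm_num)
  have k4 := key 2 (by norm_num)
  rw [show a + -2 = a - 2 by ring, show b + -2 = b - 2 by ring] at k0
  rw [show a + -1 = a - 1 by ring, show b + -1 = b - 1 by ring] at k1
  rw [add_zero, add_zero] at k2
  rw [phiH_eq, phiH_eq]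
  rw [abs_le] at k0 k1 k2 k3 k4 ⊢
  constructor
  · linarith [k0.1, k0.2, k1.1, k1.2, k2.1, k2.2, k3.1, k3.2, k4.1, k4.2]
  · linarith [k0.1, k0.2, k1.1, k1.2, k2.1, k2.2, k3.1, k3.2, k4.1, k4.2]

lemma phiH_bound {H x : ℝ} (hH0 : 0 < H) (hH1 : H ≤ 1) (hx : |x| ≤ 1) : |phiH H x| ≤ 72 := by
  have key : ∀ c : ℝ, |c| ≤ 2 → 0 ≤ |x + c| ^ (2 * H) ∧ |x + c| ^ (2 * H) ≤ 9 := by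
    intro c hc
    refine ⟨Real.rpow_nonneg (abs_nonneg _) _, ?_⟩
    have h1 : |x + c| ≤ 3 := (abs_add_le x c).trans (by linarith)
    calc |x + c| ^ (2 * H) ≤ 3 ^ (2 * H) :=
          Real.rpow_le_rpow (abs_nonneg _) h1 (by linarith)
      _ ≤ 3 ^ (2 : ℝ) := Real.rpow_le_rpow_of_exponent_le (by norm_num) (by linarith)
      _ = 9 := by
          rw [show (2:ℝ) = ((2:ℕ):ℝ) by norm_num, Real.rpow_natCast]; norm_num
  have k0 := key (-2) (by norm_num)
  have k1 := key (-1) (by norm_num)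
  have k2 := key 0 (by norm_num)
  have k3 := key 1 (by norm_num)
  have k4 := key 2 (by norm_num)
  rw [show x + -2 = x - 2 by ring] at k0
  rw [show x + -1 = x - 1 by ring] at k1
  rw [add_zero] at k2
  rw [phiH_eq, abs_le]
  constructor
  · linarith [k0.1, k0.2, k1.1, k1.2, k2.1, k2.2, k3.1, k3.2, k4.1, k4.2]
  · linarith [k0.1, k0.2, k1.1, k1.2, k2.1, k2.2, k3.1, k3.2, k4.1, k4.2]

lemma continuousOn_of_holder {f : ℝ → ℝ} {s : Set ℝ} {C α : ℝ} (hα : 0 < α)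
    (h : ∀ x ∈ s, ∀ y ∈ s, |f y - f x| ≤ C * |y - x| ^ α) : ContinuousOn f s := by
  intro x hx
  rw [ContinuousWithinAt, tendsto_iff_dist_tendsto_zero]
  have hg : Filter.Tendsto (fun y : ℝ => C * |y - x| ^ α) (nhdsWithin x s) (nhds 0) := by
    have h1 : Filter.Tendsto (fun y : ℝ => |y - x|) (nhdsWithin x s) (nhds 0) := by
      have h0 : Continuous fun y : ℝ => |y - x| := (continuous_id.sub continuous_const).abs
      have := h0.tendsto' x 0 (by simp)
      exact this.mono_left nhdsWithin_le_nhds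
    have h2 : Filter.Tendsto (fun t : ℝ => C * t ^ α) (nhds 0) (nhds 0) := by
      have hc : ContinuousAt (fun t : ℝ => t ^ α) 0 :=
        Real.continuousAt_rpow_const 0 α (Or.inr hα.le)
      have hc2 : ContinuousAt (fun t : ℝ => C * t ^ α) 0 := continuousAt_const.mul hc
      have := hc2.tendsto
      simpa [Real.zero_rpow hα.ne'] using this
    exact h2.comp h1
  refine squeeze_zero' (Filter.Eventually.of_forall fun y => dist_nonneg) ?_ hg
  filter_upwards [self_mem_nhdsWithin] with y hy
  rw [Real.dist_eq]
  exact h x hx y hy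

set_option maxHeartbeats 2000000 in
theorem kappaP_riemann_approximation (w : ℝ → ℝ) (hwcont : ContinuousOn w (Set.Icc 0 1))
    (L : NNReal) (hw : LipschitzOnWith L w (Set.Icc 0 1))
    (Hm Hp : ℝ) (h0 : 0 < Hm) (h1 : Hm ≤ Hp) (h2 : Hp < 1) :
    ∃ c > (0 : ℝ), ∀ p : ℕ, 1 ≤ p → ∀ H ∈ Set.Icc Hm Hp,
      |kappaP w p H - kappaInf w H| ≤ c * (p : ℝ) ^ (-(min (2 * H) 1)) := by
  obtain ⟨M0, hM0⟩ := isCompact_Icc.exists_bound_of_continuousOn hwcont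
  set M : ℝ := max M0 0 with hMdef
  have hM : 0 ≤ M := le_max_right _ _
  have hwb : ∀ x ∈ Set.Icc (0:ℝ) 1, |w x| ≤ M := fun x hx =>
    le_trans (hM0 x hx) (le_max_left _ _)
  have hL0 : (0:ℝ) ≤ L := L.coe_nonneg
  refine ⟨96 * M ^ 2 + 144 * M * L + 1, by positivity, ?_⟩
  intro p hp H hH
  set α := min (2 * H) 1 with hαdef
  have hH0 : 0 < H := lt_of_lt_of_le h0 hH.1
  have hH1 : H ≤ 1 := le_of_lt (lt_of_le_of_lt hH.2 h2)
  have hα0 : 0 < α := lt_min (by linarith) one_pos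
  have hα1 : α ≤ 1 := min_le_right _ _
  have hp0 : (0:ℝ) < p := by exact_mod_cast hp
  set δ : ℝ := (p:ℝ)⁻¹ with hδdef
  have hδ0 : 0 < δ := inv_pos.2 hp0
  have hδ1 : δ ≤ 1 := by
    rw [hδdef]
    exact inv_le_one_of_one_le₀ (by exact_mod_cast hp)
  have hδα0 : 0 ≤ δ ^ α := Real.rpow_nonneg hδ0.le _
  have hpδ : (p:ℝ) * δ = 1 := mul_inv_cancel₀ hp0.ne'
  set aa : ℕ → ℝ := fun k => (k:ℝ) / p with haa
  have haamono : ∀ k : ℕ, aa k ≤ aa (k + 1) := by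
    intro k
    exact (div_le_div_iff_of_pos_right hp0).2 (by push_cast; linarith)
  have hlen : ∀ k : ℕ, aa (k + 1) - aa k = δ := by
    intro k
    simp only [haa, hδdef]
    push_cast
    field_simp
    ring
  have hcell : ∀ k : ℕ, k < p → Set.Icc (aa k) (aa (k + 1)) ⊆ Set.Icc 0 1 := by
    intro k hk
    apply Set.Icc_subset_Icc
    · simp only [haa]; positivity
    · simp only [haa]
      rw [div_le_one hp0]
      push_cast
      have : (k:ℝ) + 1 ≤ p := by exact_mod_cast Nat.succ_le_of_lt hk
      linarith
  have huIoc : ∀ k : ℕ, Set.uIoc (aa k) (aa (k + 1)) = Set.Ioc (aa k) (aa (k + 1)) :=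
    fun k => Set.uIoc_of_le (haamono k)
  set F : ℝ → ℝ → ℝ := fun x y => w x * w y * phiH H (x - y) with hF
  have hphic : Continuous (phiH H) := phiH_cont hH0
  have hFcy : ∀ x : ℝ, ContinuousOn (fun y => F x y) (Set.Icc 0 1) := by
    intro x
    exact (continuousOn_const.mul hwcont).mul
      ((hphic.comp (continuous_const.sub continuous_id)).continuousOn)
  -- pointwise Hölder estimate for F on the unit square
  have hFholder : ∀ x ∈ Set.Icc (0:ℝ) 1, ∀ y ∈ Set.Icc (0:ℝ) 1, ∀ x' ∈ Set.Icc (0:ℝ) 1,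
      ∀ y' ∈ Set.Icc (0:ℝ) 1,
      |F x y - F x' y'| ≤ 48 * M ^ 2 * |x - y - (x' - y')| ^ α
        + 72 * M * L * (|x - x'| + |y - y'|) := by
    intro x hx y hy x' hx' y' hy'
    obtain ⟨hx1, hx2⟩ := hx; obtain ⟨hy1, hy2⟩ := hy
    obtain ⟨hx1', hx2'⟩ := hx'; obtain ⟨hy1', hy2'⟩ := hy'
    have hxy : |x - y| ≤ 1 := abs_le.2 ⟨by linarith, by linarith⟩
    have hxy' : |x' - y'| ≤ 1 := abs_le.2 ⟨by linarith, by linarith⟩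
    have hphi := phiH_holder hH0 hH1 hxy hxy'
    have hphib := phiH_bound hH0 hH1 hxy'
    have b1 := hwb x ⟨hx1, hx2⟩
    have b2 := hwb y ⟨hy1, hy2⟩
    have b3 := hwb y' ⟨hy1', hy2'⟩
    have l1 : |w x - w x'| ≤ L * |x - x'| := by
      have := hw.dist_le_mul x ⟨hx1, hx2⟩ x' ⟨hx1', hx2'⟩
      rwa [Real.dist_eq, Real.dist_eq] at this
    have l2 : |w y - w y'| ≤ L * |y - y'| := by
      have := hw.dist_le_mul y ⟨hy1, hy2⟩ y' ⟨hy1', hy2'⟩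
      rwa [Real.dist_eq, Real.dist_eq] at this
    have e1 : F x y - F x' y' = w x * w y * (phiH H (x - y) - phiH H (x' - y'))
        + (w x * (w y - w y') + w y' * (w x - w x')) * phiH H (x' - y') := by
      simp only [hF]; ring
    rw [e1]
    have t1 : |w x * w y * (phiH H (x - y) - phiH H (x' - y'))|
        ≤ M * M * (48 * |x - y - (x' - y')| ^ α) := by
      rw [abs_mul, abs_mul]
      exact mul_le_mul (mul_le_mul b1 b2 (abs_nonneg _) hM) hphi (abs_nonneg _)
        (by positivity)
    have t2 : |(w x * (w y - w y') + w y' * (w x - w x')) * phiH H (x' - y')|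
        ≤ (M * (L * |y - y'|) + M * (L * |x - x'|)) * 72 := by
      rw [abs_mul]
      apply mul_le_mul _ hphib (abs_nonneg _) (by positivity)
      refine (abs_add_le _ _).trans ?_
      rw [abs_mul, abs_mul]
      exact add_le_add (mul_le_mul b1 l2 (abs_nonneg _) hM)
        (mul_le_mul b3 l1 (abs_nonneg _) hM)
    calc |w x * w y * (phiH H (x - y) - phiH H (x' - y'))
          + (w x * (w y - w y') + w y' * (w x - w x')) * phiH H (x' - y')|
        ≤ |w x * w y * (phiH H (x - y) - phiH H (x' - y'))|
          + |(w x * (w y - w y') + w y' * (w x - w x')) * phiH H (x' - y')| := abs_add_le _ _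
      _ ≤ M * M * (48 * |x - y - (x' - y')| ^ α)
          + (M * (L * |y - y'|) + M * (L * |x - x'|)) * 72 := add_le_add t1 t2
      _ = 48 * M ^ 2 * |x - y - (x' - y')| ^ α + 72 * M * L * (|x - x'| + |y - y'|) := by
          ring
  -- the inner integral
  set G : ℝ → ℝ := fun x => ∫ y in (0:ℝ)..1, F x y with hG
  have hIccuIcc : Set.uIcc (0:ℝ) 1 = Set.Icc 0 1 := Set.uIcc_of_le (by norm_num)
  have hFint : ∀ x : ℝ, IntervalIntegrable (fun y => F x y) MeasureTheory.volume 0 1 := by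
    intro x
    apply ContinuousOn.intervalIntegrable
    rw [hIccuIcc]; exact hFcy x
  have hFintcell : ∀ x : ℝ, ∀ k : ℕ, k < p →
      IntervalIntegrable (fun y => F x y) MeasureTheory.volume (aa k) (aa (k + 1)) := by
    intro x k hk
    apply ContinuousOn.intervalIntegrable
    rw [Set.uIcc_of_le (haamono k)]
    exact (hFcy x).mono (hcell k hk)
  -- Hölder continuity of G on [0,1]
  have hGhold : ∀ x ∈ Set.Icc (0:ℝ) 1, ∀ x' ∈ Set.Icc (0:ℝ) 1,
      |G x' - G x| ≤ (48 * M ^ 2 + 72 * M * L) * |x' - x| ^ α := by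
    intro x hx x' hx'
    have hsub : G x' - G x = ∫ y in (0:ℝ)..1, (F x' y - F x y) :=
      (intervalIntegral.integral_sub (hFint x') (hFint x)).symm
    have hxx1 : |x' - x| ≤ 1 := by
      rw [abs_le]
      constructor <;> linarith [hx.1, hx.2, hx'.1, hx'.2]
    have hb : ∀ y ∈ Set.uIoc (0:ℝ) 1, ‖F x' y - F x y‖
        ≤ (48 * M ^ 2 + 72 * M * L) * |x' - x| ^ α := by
      intro y hy
      rw [Set.uIoc_of_le (by norm_num : (0:ℝ) ≤ 1)] at hy
      have hyI : y ∈ Set.Icc (0:ℝ) 1 := Set.Ioc_subset_Icc_self hy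
      have := hFholder x' hx' y hyI x hx y hyI
      rw [Real.norm_eq_abs]
      have e : x' - y - (x - y) = x' - x := by ring
      rw [e, sub_self, abs_zero, add_zero] at this
      have h5 : |x' - x| ≤ |x' - x| ^ α :=
        my_le_rpow_self (abs_nonneg _) hxx1 hα0 hα1
      have h6 : 72 * M * L * |x' - x| ≤ 72 * M * L * |x' - x| ^ α :=
        mul_le_mul_of_nonneg_left h5 (by positivity)
      linarith
    have := intervalIntegral.norm_integral_le_of_norm_le_const hb
    rw [hsub, Real.norm_eq_abs] at *
    calc |∫ y in (0:ℝ)..1, (F x' y - F x y)|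
        ≤ (48 * M ^ 2 + 72 * M * L) * |x' - x| ^ α * |1 - 0| := this
      _ = (48 * M ^ 2 + 72 * M * L) * |x' - x| ^ α := by norm_num
  have hGcont : ContinuousOn G (Set.Icc 0 1) :=
    continuousOn_of_holder hα0 (fun x hx y hy => hGhold x hx y hy)
  have hGint : ∀ k : ℕ, k < p →
      IntervalIntegrable G MeasureTheory.volume (aa k) (aa (k + 1)) := by
    intro k hk
    apply ContinuousOn.intervalIntegrable
    rw [Set.uIcc_of_le (haamono k)]
    exact hGcont.mono (hcell k hk)
  -- splitting the outer integral
  have haa0 : aa 0 = 0 := by simp [haa]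
  have haap : aa p = 1 := by simp only [haa]; exact div_self hp0.ne'
  have hsplit : ∫ x in (0:ℝ)..1, G x = ∑ l1 ∈ Finset.range p,
      ∫ x in aa l1..aa (l1 + 1), G x := by
    have h := intervalIntegral.sum_integral_adjacent_intervals
      (μ := MeasureTheory.volume) (a := aa) (f := G) (fun k hk => hGint k hk)
    rw [haa0, haap] at h
    exact h.symm
  have hkinf : kappaInf w H = ∫ x in (0:ℝ)..1, G x := by
    unfold kappaInf
    simp only [hG, hF]
  -- splitting the inner integral
  have hGx : ∀ x : ℝ, G x = ∑ l2 ∈ Finset.range p,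
      ∫ y in aa l2..aa (l2 + 1), F x y := by
    intro x
    have h := intervalIntegral.sum_integral_adjacent_intervals
      (μ := MeasureTheory.volume) (a := aa) (f := fun y => F x y)
      (fun k hk => hFintcell x k hk)
    rw [haa0, haap] at h
    simp only [hG]
    exact h.symm
  -- rewriting the Riemann sum
  have hkp : kappaP w p H = ∑ l1 ∈ Finset.range p, ∑ l2 ∈ Finset.range p,
      δ * δ * F (aa l1) (aa l2) := by
    unfold kappaP
    rw [Finset.mul_sum]
    apply Finset.sum_congr rfl
    intro l1 _
    rw [Finset.mul_sum]
    apply Finset.sum_congr rfl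
    intro l2 _
    simp only [hF, haa, hδdef]
    rw [sub_div]
    rw [sq]
    ring
  -- per-cell constants
  set C0 : ℝ := 96 * M ^ 2 + 144 * M * L with hC0
  have hC0nn : 0 ≤ C0 := by positivity
  have hinner : ∀ l1 < p, ∀ x ∈ Set.Icc (aa l1) (aa (l1 + 1)), ∀ l2 < p,
      |δ * F (aa l1) (aa l2) - ∫ y in aa l2..aa (l2 + 1), F x y| ≤ δ * (C0 * δ ^ α) := by
    intro l1 hl1 x hx l2 hl2
    have hxI : x ∈ Set.Icc (0:ℝ) 1 := hcell l1 hl1 hx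
    have hg1 : aa l1 ∈ Set.Icc (0:ℝ) 1 := hcell l1 hl1 ⟨le_refl _, haamono l1⟩
    have hg2 : aa l2 ∈ Set.Icc (0:ℝ) 1 := hcell l2 hl2 ⟨le_refl _, haamono l2⟩
    have hdx : |aa l1 - x| ≤ δ := by
      have h := hlen l1
      rw [abs_le]
      constructor <;> linarith [hx.1, hx.2]
    have hconst : ∫ _y in aa l2..aa (l2 + 1), F (aa l1) (aa l2) = δ * F (aa l1) (aa l2) := by
      rw [intervalIntegral.integral_const, hlen l2, smul_eq_mul]
    have hsubint : δ * F (aa l1) (aa l2) - (∫ y in aa l2..aa (l2 + 1), F x y)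
        = ∫ y in aa l2..aa (l2 + 1), (F (aa l1) (aa l2) - F x y) := by
      rw [intervalIntegral.integral_sub intervalIntegrable_const (hFintcell x l2 hl2), hconst]
    rw [hsubint]
    have hb : ∀ y ∈ Set.uIoc (aa l2) (aa (l2 + 1)),
        ‖F (aa l1) (aa l2) - F x y‖ ≤ C0 * δ ^ α := by
      intro y hy
      rw [huIoc l2] at hy
      have hyIcc : y ∈ Set.Icc (aa l2) (aa (l2 + 1)) := Set.Ioc_subset_Icc_self hy
      have hyI : y ∈ Set.Icc (0:ℝ) 1 := hcell l2 hl2 hyIcc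
      have hdy : |aa l2 - y| ≤ δ := by
        have h := hlen l2
        rw [abs_le]
        constructor <;> linarith [hyIcc.1, hyIcc.2]
      have hkey := hFholder (aa l1) hg1 (aa l2) hg2 x hxI y hyI
      rw [Real.norm_eq_abs]
      have hdel : |aa l1 - aa l2 - (x - y)| ≤ 2 * δ := by
        have he : aa l1 - aa l2 - (x - y) = aa l1 - x - (aa l2 - y) := by ring
        rw [he]
        refine (abs_sub _ _).trans ?_
        linarith
      have hrw1 : |aa l1 - aa l2 - (x - y)| ^ α ≤ (2 * δ) ^ α :=
        Real.rpow_le_rpow (abs_nonneg _) hdel hα0.le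
      have h2d : (2 * δ) ^ α ≤ 2 * δ ^ α := by
        rw [Real.mul_rpow (by norm_num) hδ0.le]
        have h2a : (2:ℝ) ^ α ≤ 2 := by
          calc (2:ℝ) ^ α ≤ 2 ^ (1:ℝ) := Real.rpow_le_rpow_of_exponent_le (by norm_num) hα1
            _ = 2 := Real.rpow_one 2
        nlinarith
      have hlin : δ ≤ δ ^ α := my_le_rpow_self hδ0.le hδ1 hα0 hα1
      calc |F (aa l1) (aa l2) - F x y|
          ≤ 48 * M ^ 2 * |aa l1 - aa l2 - (x - y)| ^ α
            + 72 * M * L * (|aa l1 - x| + |aa l2 - y|) := hkey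
        _ ≤ 48 * M ^ 2 * (2 * δ ^ α) + 72 * M * L * (2 * δ ^ α) := by
            have hh1 := mul_le_mul_of_nonneg_left (hrw1.trans h2d)
              (show (0:ℝ) ≤ 48 * M ^ 2 by positivity)
            have h7 : |aa l1 - x| + |aa l2 - y| ≤ 2 * δ := by linarith
            have h8 : (2:ℝ) * δ ≤ 2 * δ ^ α := by linarith
            have hh2 := mul_le_mul_of_nonneg_left (h7.trans h8)
              (show (0:ℝ) ≤ 72 * M * L by positivity)
            linarith
        _ = C0 * δ ^ α := by rw [hC0]; ring
    have hni := intervalIntegral.norm_integral_le_of_norm_le_const hb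
    rw [Real.norm_eq_abs] at hni
    calc |∫ y in aa l2..aa (l2 + 1), (F (aa l1) (aa l2) - F x y)|
        ≤ C0 * δ ^ α * |aa (l2 + 1) - aa l2| := hni
      _ = δ * (C0 * δ ^ α) := by rw [hlen l2, abs_of_nonneg hδ0.le]; ring
  have hmid : ∀ l1 < p, ∀ x ∈ Set.uIoc (aa l1) (aa (l1 + 1)),
      ‖(∑ l2 ∈ Finset.range p, δ * F (aa l1) (aa l2)) - G x‖ ≤ C0 * δ ^ α := by
    intro l1 hl1 x hx
    rw [huIoc l1] at hx
    have hxIcc : x ∈ Set.Icc (aa l1) (aa (l1 + 1)) := Set.Ioc_subset_Icc_self hx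
    rw [hGx x, ← Finset.sum_sub_distrib, Real.norm_eq_abs]
    calc |∑ l2 ∈ Finset.range p,
          (δ * F (aa l1) (aa l2) - ∫ y in aa l2..aa (l2 + 1), F x y)|
        ≤ ∑ l2 ∈ Finset.range p,
          |δ * F (aa l1) (aa l2) - ∫ y in aa l2..aa (l2 + 1), F x y| :=
          Finset.abs_sum_le_sum_abs _ _
      _ ≤ ∑ _l2 ∈ Finset.range p, δ * (C0 * δ ^ α) :=
          Finset.sum_le_sum fun l2 hl2 =>
            hinner l1 hl1 x hxIcc l2 (Finset.mem_range.1 hl2)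
      _ = (p:ℝ) * (δ * (C0 * δ ^ α)) := by
          rw [Finset.sum_const, Finset.card_range, nsmul_eq_mul]
      _ = C0 * δ ^ α := by rw [← mul_assoc, hpδ, one_mul]
  have hEl : ∀ l1 ∈ Finset.range p,
      |(∑ l2 ∈ Finset.range p, δ * δ * F (aa l1) (aa l2))
        - ∫ x in aa l1..aa (l1 + 1), G x| ≤ δ * (C0 * δ ^ α) := by
    intro l1 hl1m
    have hl1 := Finset.mem_range.1 hl1m
    have hconst : ∫ _x in aa l1..aa (l1 + 1), (∑ l2 ∈ Finset.range p, δ * F (aa l1) (aa l2))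
        = ∑ l2 ∈ Finset.range p, δ * δ * F (aa l1) (aa l2) := by
      rw [intervalIntegral.integral_const, hlen l1, smul_eq_mul, Finset.mul_sum]
      exact Finset.sum_congr rfl fun l2 _ => by ring
    have hsub : (∑ l2 ∈ Finset.range p, δ * δ * F (aa l1) (aa l2))
          - (∫ x in aa l1..aa (l1 + 1), G x)
        = ∫ x in aa l1..aa (l1 + 1),
            ((∑ l2 ∈ Finset.range p, δ * F (aa l1) (aa l2)) - G x) := by
      rw [intervalIntegral.integral_sub intervalIntegrable_const (hGint l1 hl1), hconst]
    rw [hsub]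
    have hni := intervalIntegral.norm_integral_le_of_norm_le_const (hmid l1 hl1)
    rw [Real.norm_eq_abs] at hni
    calc |∫ x in aa l1..aa (l1 + 1),
          ((∑ l2 ∈ Finset.range p, δ * F (aa l1) (aa l2)) - G x)|
        ≤ C0 * δ ^ α * |aa (l1 + 1) - aa l1| := hni
      _ = δ * (C0 * δ ^ α) := by rw [hlen l1, abs_of_nonneg hδ0.le]; ring
  have hfinal : |kappaP w p H - kappaInf w H| ≤ C0 * δ ^ α := by
    rw [hkp, hkinf, hsplit, ← Finset.sum_sub_distrib]
    calc |∑ l1 ∈ Finset.range p,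
          ((∑ l2 ∈ Finset.range p, δ * δ * F (aa l1) (aa l2))
            - ∫ x in aa l1..aa (l1 + 1), G x)|
        ≤ ∑ l1 ∈ Finset.range p,
          |(∑ l2 ∈ Finset.range p, δ * δ * F (aa l1) (aa l2))
            - ∫ x in aa l1..aa (l1 + 1), G x| := Finset.abs_sum_le_sum_abs _ _
      _ ≤ ∑ _l1 ∈ Finset.range p, δ * (C0 * δ ^ α) := Finset.sum_le_sum hEl
      _ = (p:ℝ) * (δ * (C0 * δ ^ α)) := by
          rw [Finset.sum_const, Finset.card_range, nsmul_eq_mul]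
      _ = C0 * δ ^ α := by rw [← mul_assoc, hpδ, one_mul]
  have hrp : (p:ℝ) ^ (-α) = δ ^ α := by
    rw [Real.rpow_neg hp0.le, hδdef, ← Real.inv_rpow hp0.le]
  calc |kappaP w p H - kappaInf w H| ≤ C0 * δ ^ α := hfinal
    _ ≤ (C0 + 1) * δ ^ α := by nlinarith
    _ = (C0 + 1) * (p:ℝ) ^ (-α) := by rw [hrp]
end

section
/- Let K ≥ 0 be an integer and w : [0,1] → ℝ be K times continuously differentiable with ∂^i w(0) = ∂^i w(1) = 0 for all 0 ≤ i < K. For integers p ≥ 1 and -K ≤ l ≤ p-1, define α_{l,p} = ∑_{i = max(0,-l)}^{min(K, p-1-l)} C(K,i) (-1)^i w((l+i)/p). Then there is a constant C > 0 depending only on w and K such that |α_{l,p}| ≤ C p^{-K} for all p ≥ 1 and all -K ≤ l ≤ p-1. -/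
open Set Finset Polynomial

/-- Iterated derivatives within a subset agree with those in a larger set. -/
lemma AlphaAux.iterDW_subset {f : ℝ → ℝ} {s t : Set ℝ} (hst : s ⊆ t) (hs : UniqueDiffOn ℝ s)
    (ht : UniqueDiffOn ℝ t) {n N : ℕ} (hf : ContDiffOn ℝ N f t) (hn : n ≤ N) :
    ∀ x ∈ s, iteratedDerivWithin n f s x = iteratedDerivWithin n f t x := by
  induction n with
  | zero => intro x hx; simp [iteratedDerivWithin_zero]
  | succ n ih =>
    intro x hx
    rw [iteratedDerivWithin_succ, iteratedDerivWithin_succ]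
    rw [derivWithin_congr (fun y hy => ih (le_of_lt (Nat.lt_of_succ_le hn)) y hy)
      (ih (le_of_lt (Nat.lt_of_succ_le hn)) x hx)]
    exact derivWithin_subset hst (hs x hx)
      ((hf.differentiableOn_iteratedDerivWithin (by exact_mod_cast Nat.lt_of_succ_le hn) ht)
        x (hst hx))

lemma AlphaAux.reflect_mapsTo : Set.MapsTo (fun y : ℝ => 1 - y) (Icc 0 1) (Icc 0 1) := by
  intro y hy; constructor <;> simp at hy ⊢ <;> linarith [hy.1, hy.2]

/-- Iterated derivatives of the reflected function. -/
lemma AlphaAux.iterDW_reflect {f : ℝ → ℝ} {N : ℕ} (hf : ContDiffOn ℝ N f (Icc 0 1)) {n : ℕ}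
    (hn : n ≤ N) : ∀ x ∈ Icc (0:ℝ) 1,
    iteratedDerivWithin n (fun y => f (1 - y)) (Icc 0 1) x
      = (-1 : ℝ)^n * iteratedDerivWithin n f (Icc 0 1) (1 - x) := by
  induction n with
  | zero => intro x hx; simp
  | succ n ih =>
    intro x hx
    have hu : UniqueDiffOn ℝ (Icc (0:ℝ) 1) := uniqueDiffOn_Icc zero_lt_one
    have hn' : n ≤ N := le_of_lt (Nat.lt_of_succ_le hn)
    rw [iteratedDerivWithin_succ]
    rw [derivWithin_congr (fun y hy => ih hn' y hy) (ih hn' x hx)]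
    have hF : DifferentiableOn ℝ (iteratedDerivWithin n f (Icc 0 1)) (Icc 0 1) :=
      hf.differentiableOn_iteratedDerivWithin (by exact_mod_cast Nat.lt_of_succ_le hn) hu
    have h1x : (1:ℝ) - x ∈ Icc (0:ℝ) 1 := AlphaAux.reflect_mapsTo hx
    have hFd : HasDerivWithinAt (iteratedDerivWithin n f (Icc 0 1))
        (derivWithin (iteratedDerivWithin n f (Icc 0 1)) (Icc 0 1) (1 - x)) (Icc 0 1) (1 - x) :=
      (hF (1-x) h1x).hasDerivWithinAt
    have haff : HasDerivWithinAt (fun y : ℝ => 1 - y) (-1) (Icc 0 1) x :=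
      (hasDerivWithinAt_id x _).const_sub 1
    have hcomp := HasDerivWithinAt.scomp x hFd haff AlphaAux.reflect_mapsTo
    have hmul := hcomp.const_mul ((-1:ℝ)^n)
    simp only [Function.comp_def] at hmul
    rw [hmul.derivWithin (hu x hx)]
    rw [iteratedDerivWithin_succ]
    simp [pow_succ]

lemma AlphaAux.degree_sub_comp_lt {K : ℕ} {P : Polynomial ℝ} (hP : P.degree < (K : ℕ) + 1) :
    (P - P.comp (X + 1)).degree < (K : ℕ) := by
  by_cases h0 : P.natDegree = 0
  · obtain ⟨c, rfl⟩ := Polynomial.natDegree_eq_zero.mp h0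
    simpa using (by exact_mod_cast WithBot.bot_lt_coe K : (⊥ : WithBot ℕ) < (K : WithBot ℕ))
  · have hPne : P ≠ 0 := fun h => h0 (by simp [h])
    have hq : (X + 1 : Polynomial ℝ).natDegree = 1 := by
      simpa using Polynomial.natDegree_X_add_C (1:ℝ)
    have hcompdeg : (P.comp (X + 1)).natDegree = P.natDegree := by
      rw [Polynomial.natDegree_comp, hq, mul_one]
    have hlc : (P.comp (X + 1)).leadingCoeff = P.leadingCoeff := by
      rw [Polynomial.leadingCoeff_comp (by rw [hq]; exact one_ne_zero)]
      have : (X + 1 : Polynomial ℝ).leadingCoeff = 1 := by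
        simpa using (Polynomial.monic_X_add_C (1:ℝ)).leadingCoeff
      rw [this, one_pow, mul_one]
    have hcompne : P.comp (X + 1) ≠ 0 := by
      intro h
      exact hPne (Polynomial.leadingCoeff_eq_zero.mp
        (by rw [← hlc, h, Polynomial.leadingCoeff_zero]))
    have hdeq : P.degree = (P.comp (X + 1)).degree := by
      rw [Polynomial.degree_eq_natDegree hPne, Polynomial.degree_eq_natDegree hcompne, hcompdeg]
    have hlt := Polynomial.degree_sub_lt hdeq hPne hlc.symm
    have : P.degree ≤ (K : ℕ) := by
      rw [Polynomial.degree_eq_natDegree hPne] at hP ⊢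
      exact_mod_cast Nat.lt_succ_iff.mp (by exact_mod_cast hP)
    exact lt_of_lt_of_le hlt this

lemma AlphaAux.moments_poly : ∀ (K : ℕ) (P : Polynomial ℝ), P.degree < (K : ℕ) →
    ∑ i ∈ range (K + 1), (-1 : ℝ)^i * (K.choose i : ℝ) * P.eval (i : ℝ) = 0 := by
  intro K
  induction K with
  | zero =>
    intro P hP
    have : P = 0 := by
      rw [← Polynomial.degree_eq_bot]
      exact Nat.WithBot.lt_zero_iff.mp (by exact_mod_cast hP)
    simp [this]
  | succ K ih =>
    intro P hP
    have hsplit : ∑ i ∈ range (K + 2), (-1 : ℝ)^i * ((K+1).choose i : ℝ) * P.eval (i : ℝ)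
        = ∑ i ∈ range (K + 2), (-1 : ℝ)^i * (K.choose i : ℝ) * P.eval (i : ℝ)
          - ∑ i ∈ range (K + 1), (-1 : ℝ)^i * (K.choose i : ℝ) * P.eval ((i : ℝ) + 1) := by
      rw [Finset.sum_range_succ'
          (fun i => (-1:ℝ)^i * (((K+1).choose i : ℕ) : ℝ) * P.eval (i : ℝ)) (K+1),
          Finset.sum_range_succ'
          (fun i => (-1:ℝ)^i * ((K.choose i : ℕ) : ℝ) * P.eval (i : ℝ)) (K+1)]
      have hterm : ∀ x ∈ range (K+1),
          (-1:ℝ)^(x+1) * (((K+1).choose (x+1) : ℕ) : ℝ) * P.eval ((x+1 : ℕ) : ℝ)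
          = ((-1:ℝ)^(x+1) * ((K.choose (x+1) : ℕ) : ℝ) * P.eval ((x+1 : ℕ) : ℝ))
            - (-1:ℝ)^x * ((K.choose x : ℕ) : ℝ) * P.eval ((x : ℝ) + 1) := by
        intro x _
        rw [Nat.choose_succ_succ]
        push_cast
        ring
      rw [Finset.sum_congr rfl hterm, Finset.sum_sub_distrib]
      simp only [Nat.choose_zero_right]
      ring
    have htail : ∑ i ∈ range (K + 2), (-1 : ℝ)^i * (K.choose i : ℝ) * P.eval (i : ℝ)
        = ∑ i ∈ range (K + 1), (-1 : ℝ)^i * (K.choose i : ℝ) * P.eval (i : ℝ) := by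
      rw [Finset.sum_range_succ, Nat.choose_succ_self]
      simp
    have hQ := ih (P - P.comp (X + 1)) (AlphaAux.degree_sub_comp_lt (by exact_mod_cast hP))
    have hQeval : ∀ i : ℕ,
        (P - P.comp (X + 1)).eval (i : ℝ) = P.eval (i : ℝ) - P.eval ((i : ℝ) + 1) := by
      intro i; simp [Polynomial.eval_comp]
    calc ∑ i ∈ range (K + 1 + 1), (-1 : ℝ)^i * ((K+1).choose i : ℝ) * P.eval (i : ℝ)
        = ∑ i ∈ range (K + 1), (-1 : ℝ)^i * (K.choose i : ℝ)
            * (P.eval (i : ℝ) - P.eval ((i : ℝ) + 1)) := by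
          rw [hsplit, htail, ← Finset.sum_sub_distrib]
          congr 1; funext i; ring
      _ = 0 := by
          simp only [← hQeval]
          exact hQ

lemma AlphaAux.moments (K k : ℕ) (hk : k < K) :
    ∑ i ∈ range (K + 1), (-1 : ℝ)^i * (K.choose i : ℝ) * (i : ℝ)^k = 0 := by
  have := AlphaAux.moments_poly K (X ^ k)
    (by simpa [Polynomial.degree_X_pow] using
      (by exact_mod_cast hk : (k : WithBot ℕ) < K))
  simpa using this

lemma AlphaAux.near_left {n : ℕ} {w : ℝ → ℝ} {M : ℝ}
    (hsmooth : ContDiffOn ℝ (n + 1) w (Icc 0 1))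
    (hb : ∀ i : ℕ, i < n + 1 → iteratedDerivWithin i w (Icc 0 1) 0 = 0)
    (hM : ∀ y ∈ Icc (0:ℝ) 1, ‖iteratedDerivWithin (n + 1) w (Icc 0 1) y‖ ≤ M) :
    ∀ x ∈ Icc (0:ℝ) 1, |w x| ≤ M * x ^ (n + 1) := by
  intro x hx
  have hM0 : 0 ≤ M := le_trans (norm_nonneg _) (hM 0 ⟨le_refl 0, zero_le_one⟩)
  have hT : taylorWithinEval w n (Icc 0 1) 0 x = 0 := by
    rw [taylor_within_apply]
    apply Finset.sum_eq_zero
    intro k hk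
    rw [hb k (Finset.mem_range.mp hk)]
    simp
  have h := taylor_mean_remainder_bound zero_le_one hsmooth hx hM
  rw [hT, sub_zero, Real.norm_eq_abs, sub_zero] at h
  refine h.trans ?_
  rw [div_le_iff₀ (by positivity : (0:ℝ) < (Nat.factorial n : ℝ))]
  have hx0 : (0:ℝ) ≤ x := hx.1
  have hfac : (1:ℝ) ≤ (Nat.factorial n : ℝ) := by
    exact_mod_cast Nat.one_le_iff_ne_zero.mpr n.factorial_ne_zero
  nlinarith [pow_nonneg hx0 (n+1), mul_nonneg hM0 (pow_nonneg hx0 (n+1))]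

/-- The pre-averaged moving-average weights. -/
noncomputable def alphaLP (K : ℕ) (w : ℝ → ℝ) (l : ℤ) (p : ℕ) : ℝ :=
  ∑ i ∈ Finset.range (K + 1),
    if 0 ≤ l + (i : ℤ) ∧ l + (i : ℤ) ≤ (p : ℤ) - 1 then
      (K.choose i : ℝ) * (-1) ^ i * w (((l : ℝ) + i) / p)
    else 0

theorem alphaLP_bound (K : ℕ) (w : ℝ → ℝ)
    (hsmooth : ContDiffOn ℝ K w (Set.Icc 0 1))
    (hbound : ∀ i : ℕ, i < K →
      iteratedDerivWithin i w (Set.Icc 0 1) 0 = 0 ∧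
      iteratedDerivWithin i w (Set.Icc 0 1) 1 = 0) :
    ∃ C > (0 : ℝ), ∀ p : ℕ, 1 ≤ p → ∀ l : ℤ, -(K : ℤ) ≤ l → l ≤ (p : ℤ) - 1 →
      |alphaLP K w l p| ≤ C * ((p : ℝ) ^ K)⁻¹ := by
  rcases Nat.eq_zero_or_pos K with hK0 | hKpos
  · -- trivial case K = 0
    subst hK0
    obtain ⟨M, hM⟩ := isCompact_Icc.exists_bound_of_continuousOn hsmooth.continuousOn
    have hM0 : 0 ≤ M := le_trans (norm_nonneg _) (hM 0 ⟨le_refl 0, zero_le_one⟩)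
    refine ⟨M + 1, by linarith, ?_⟩
    intro p hp l _ hl2
    have hp0 : (0:ℝ) < p := by exact_mod_cast hp
    simp only [alphaLP, zero_add, Finset.sum_range_one, pow_zero, inv_one, mul_one]
    split_ifs with hc
    · have hc1 : (0:ℤ) ≤ l := by have := hc.1; omega
      have hc2 : l ≤ (p:ℤ) - 1 := by have := hc.2; omega
      have h1 : (0:ℝ) ≤ (l:ℝ) := by exact_mod_cast hc1
      have h2 : (l:ℝ) ≤ (p:ℝ) - 1 := by exact_mod_cast hc2
      have hmem : (l:ℝ) / p ∈ Icc (0:ℝ) 1 := by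
        constructor
        · positivity
        · rw [div_le_one hp0]; linarith
      have := hM _ hmem
      rw [Real.norm_eq_abs] at this
      simp only [Nat.choose_self, Nat.cast_one, one_mul, Nat.cast_zero, add_zero]
      calc |w ((l:ℝ) / p)| ≤ M := this
        _ ≤ M + 1 := by linarith
    · simpa using by linarith
  · obtain ⟨n, rfl⟩ : ∃ n, K = n + 1 := ⟨K - 1, (Nat.succ_pred_eq_of_pos hKpos).symm⟩
    have hu : UniqueDiffOn ℝ (Icc (0:ℝ) 1) := uniqueDiffOn_Icc zero_lt_one
    have hcont : ContinuousOn (iteratedDerivWithin (n+1) w (Icc 0 1)) (Icc 0 1) :=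
      hsmooth.continuousOn_iteratedDerivWithin le_rfl hu
    obtain ⟨M, hM⟩ := isCompact_Icc.exists_bound_of_continuousOn hcont
    have hM0 : 0 ≤ M := le_trans (norm_nonneg _) (hM 0 ⟨le_refl 0, zero_le_one⟩)
    have hMabs : ∀ y ∈ Icc (0:ℝ) 1, |iteratedDerivWithin (n+1) w (Icc 0 1) y| ≤ M := by
      intro y hy; rw [← Real.norm_eq_abs]; exact hM y hy
    -- near-left estimate
    have hL : ∀ x ∈ Icc (0:ℝ) 1, |w x| ≤ M * x ^ (n+1) :=
      AlphaAux.near_left hsmooth (fun i hi => (hbound i hi).1) hM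
    -- near-right estimate via reflection
    have hg : ContDiffOn ℝ (n+1) (fun y => w (1 - y)) (Icc 0 1) :=
      hsmooth.comp ((contDiff_const.sub contDiff_id).contDiffOn) AlphaAux.reflect_mapsTo
    have hgb : ∀ i : ℕ, i < n + 1 →
        iteratedDerivWithin i (fun y => w (1 - y)) (Icc 0 1) 0 = 0 := by
      intro i hi
      rw [AlphaAux.iterDW_reflect hsmooth (le_of_lt hi) 0 ⟨le_refl 0, zero_le_one⟩]
      simp [(hbound i hi).2]
    have hgM : ∀ y ∈ Icc (0:ℝ) 1,
        ‖iteratedDerivWithin (n+1) (fun y => w (1 - y)) (Icc 0 1) y‖ ≤ M := by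
      intro y hy
      rw [AlphaAux.iterDW_reflect hsmooth le_rfl y hy, Real.norm_eq_abs, abs_mul, abs_pow,
        abs_neg, abs_one, one_pow, one_mul]
      exact hMabs _ (AlphaAux.reflect_mapsTo hy)
    have hR : ∀ x ∈ Icc (0:ℝ) 1, |w x| ≤ M * (1 - x) ^ (n+1) := by
      intro x hx
      have := AlphaAux.near_left hg hgb hgM (1 - x) (AlphaAux.reflect_mapsTo hx)
      simpa using this
    refine ⟨2^(n+1) * (M+1) * ((n:ℝ)+1)^(n+1), by positivity, ?_⟩
    intro p hp l hl1 hl2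
    have hp0 : (0:ℝ) < p := by exact_mod_cast hp
    have hfac : (1:ℝ) ≤ (Nat.factorial n : ℝ) := by
      exact_mod_cast Nat.one_le_iff_ne_zero.mpr n.factorial_ne_zero
    set B : ℝ := M * (((n:ℝ)+1)/p)^(n+1) with hB
    have hB0 : 0 ≤ B := by positivity
    -- the shared concluding estimate
    have hbig : (2:ℝ)^(n+1) * B ≤ 2^(n+1) * (M+1) * ((n:ℝ)+1)^(n+1) * ((p:ℝ)^(n+1))⁻¹ := by
      rw [hB, div_pow, div_eq_mul_inv]
      have h1 : (0:ℝ) ≤ ((p:ℝ)^(n+1))⁻¹ := by positivity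
      have h2 : (0:ℝ) ≤ ((n:ℝ)+1)^(n+1) := by positivity
      have h3 : (0:ℝ) ≤ (2:ℝ)^(n+1) := by positivity
      nlinarith [mul_nonneg (mul_nonneg h3 h2) h1]
    have hconc : ∀ f : ℕ → ℝ,
        (∀ i ∈ range (n+1+1), |f i| ≤ ((n+1).choose i : ℝ) * B) →
        |∑ i ∈ range (n+1+1), f i| ≤ 2^(n+1) * (M+1) * ((n:ℝ)+1)^(n+1) * ((p:ℝ)^(n+1))⁻¹ := by
      intro f hf
      calc |∑ i ∈ range (n+1+1), f i| ≤ ∑ i ∈ range (n+1+1), |f i| :=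
            Finset.abs_sum_le_sum_abs _ _
        _ ≤ ∑ i ∈ range (n+1+1), ((n+1).choose i : ℝ) * B := Finset.sum_le_sum hf
        _ = (2:ℝ)^(n+1) * B := by
            rw [← Finset.sum_mul]
            congr 1
            exact_mod_cast Nat.sum_range_choose (n+1)
        _ ≤ _ := hbig
    by_cases hcase : 0 ≤ l ∧ l + ((n:ℤ)+1) ≤ (p:ℤ) - 1
    · -- interior case: all indicators hold, use Taylor at l/p with moment cancellation
      set a : ℝ := (l:ℝ)/p with ha
      have hl0 : (0:ℝ) ≤ (l:ℝ) := by exact_mod_cast hcase.1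
      have hlp : (l:ℝ) + ((n:ℝ)+1) ≤ (p:ℝ) - 1 := by exact_mod_cast hcase.2
      have ha0 : 0 ≤ a := by positivity
      have ha1 : a < 1 := by
        rw [ha, div_lt_one hp0]; linarith
      have hs_sub : Icc a 1 ⊆ Icc (0:ℝ) 1 := Icc_subset_Icc ha0 le_rfl
      have hus : UniqueDiffOn ℝ (Icc a 1) := uniqueDiffOn_Icc ha1
      have hMs : ∀ y ∈ Icc a 1, ‖iteratedDerivWithin (n+1) w (Icc a 1) y‖ ≤ M := by
        intro y hy
        rw [AlphaAux.iterDW_subset hs_sub hus hu hsmooth le_rfl y hy]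
        exact hM y (hs_sub hy)
      have hxmem : ∀ i ∈ range (n+1+1), ((l:ℝ) + i)/p ∈ Icc a 1 := by
        intro i hi
        have hi' : (i:ℝ) ≤ (n:ℝ)+1 := by
          exact_mod_cast Nat.lt_succ_iff.mp (Finset.mem_range.mp hi)
        have hi0 : (0:ℝ) ≤ (i:ℝ) := Nat.cast_nonneg i
        constructor
        · rw [ha, div_le_div_iff_of_pos_right hp0]; linarith
        · rw [div_le_one hp0]; linarith
      obtain ⟨hc1, hc2⟩ := hcase
      have hxa : ∀ i : ℕ, ((l:ℝ) + i)/p - a = (i:ℝ)/p := by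
        intro i; rw [ha, div_sub_div_same, add_sub_cancel_left]
      have hrem : ∀ i ∈ range (n+1+1),
          |w (((l:ℝ) + i)/p) - taylorWithinEval w n (Icc a 1) a (((l:ℝ) + i)/p)| ≤ B := by
        intro i hi
        have hi' : (i:ℝ) ≤ (n:ℝ)+1 := by
          exact_mod_cast Nat.lt_succ_iff.mp (Finset.mem_range.mp hi)
        have h := taylor_mean_remainder_bound ha1.le (hsmooth.mono hs_sub) (hxmem i hi) hMs
        rw [Real.norm_eq_abs] at h
        refine h.trans ?_
        rw [hxa i]
        calc M * ((i:ℝ)/p) ^ (n+1) / (Nat.factorial n : ℝ)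
            ≤ M * ((i:ℝ)/p) ^ (n+1) :=
              div_le_self (mul_nonneg hM0 (by positivity)) hfac
          _ ≤ B := by
              rw [hB]
              apply mul_le_mul_of_nonneg_left _ hM0
              apply pow_le_pow_left₀ (by positivity) _
              rw [div_le_div_iff_of_pos_right hp0]; linarith
      have hT0 : ∑ i ∈ range (n+1+1), (((n+1).choose i : ℝ) * (-1)^i
          * taylorWithinEval w n (Icc a 1) a (((l:ℝ) + i)/p)) = 0 := by
        have hTx : ∀ i : ℕ, taylorWithinEval w n (Icc a 1) a (((l:ℝ) + i)/p)
            = ∑ k ∈ range (n+1), ((Nat.factorial k : ℝ)⁻¹ * ((i:ℝ)/p)^k)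
                * iteratedDerivWithin k w (Icc a 1) a := by
          intro i
          rw [taylor_within_apply]
          exact Finset.sum_congr rfl fun k _ => by rw [smul_eq_mul, hxa i]
        simp only [hTx, Finset.mul_sum]
        rw [Finset.sum_comm]
        apply Finset.sum_eq_zero
        intro k hk
        have hm := AlphaAux.moments (n+1) k (Finset.mem_range.mp hk)
        have hterm : ∀ i ∈ range (n+1+1),
            ((n+1).choose i : ℝ) * (-1)^i * (((Nat.factorial k : ℝ)⁻¹ * ((i:ℝ)/p)^k)
              * iteratedDerivWithin k w (Icc a 1) a)
            = ((Nat.factorial k : ℝ)⁻¹ * ((p:ℝ)⁻¹)^k * iteratedDerivWithin k w (Icc a 1) a)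
              * ((-1:ℝ)^i * ((n+1).choose i : ℝ) * (i:ℝ)^k) := by
          intro i _
          rw [div_eq_mul_inv, mul_pow]
          ring
        rw [Finset.sum_congr rfl hterm, ← Finset.mul_sum, hm, mul_zero]
      have hall : alphaLP (n+1) w l p = ∑ i ∈ range (n+1+1),
          (((n+1).choose i : ℝ) * (-1)^i * w (((l:ℝ) + i)/p)) := by
        apply Finset.sum_congr rfl
        intro i hi
        have hin : (i:ℤ) ≤ (n:ℤ)+1 := by
          exact_mod_cast Nat.lt_succ_iff.mp (Finset.mem_range.mp hi)
        exact if_pos ⟨by omega, by omega⟩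
      have hα : alphaLP (n+1) w l p = ∑ i ∈ range (n+1+1),
          (((n+1).choose i : ℝ) * (-1)^i * (w (((l:ℝ) + i)/p)
            - taylorWithinEval w n (Icc a 1) a (((l:ℝ) + i)/p))) := by
        rw [hall, ← sub_zero (∑ i ∈ range (n+1+1),
          (((n+1).choose i : ℝ) * (-1)^i * w (((l:ℝ) + i)/p))), ← hT0,
          ← Finset.sum_sub_distrib]
        exact Finset.sum_congr rfl fun i _ => by ring
      rw [hα]
      apply hconc
      intro i hi
      calc |((n+1).choose i : ℝ) * (-1)^i * (w (((l:ℝ) + i)/p)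
            - taylorWithinEval w n (Icc a 1) a (((l:ℝ) + i)/p))|
          = ((n+1).choose i : ℝ) * |w (((l:ℝ) + i)/p)
            - taylorWithinEval w n (Icc a 1) a (((l:ℝ) + i)/p)| := by
            rw [abs_mul, abs_mul, abs_pow, abs_neg, abs_one, one_pow, mul_one, Nat.abs_cast]
        _ ≤ ((n+1).choose i : ℝ) * B :=
            mul_le_mul_of_nonneg_left (hrem i hi) (Nat.cast_nonneg _)
    · -- boundary case: each term is small individually
      rw [show alphaLP (n+1) w l p = ∑ i ∈ range (n+1+1),
          (if 0 ≤ l + (i : ℤ) ∧ l + (i : ℤ) ≤ (p : ℤ) - 1 then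
            ((n+1).choose i : ℝ) * (-1) ^ i * w (((l : ℝ) + i) / p) else 0) from rfl]
      apply hconc
      intro i hi
      have hi' : (i:ℝ) ≤ (n:ℝ)+1 := by
        exact_mod_cast Nat.lt_succ_iff.mp (Finset.mem_range.mp hi)
      have hi0 : (0:ℝ) ≤ (i:ℝ) := Nat.cast_nonneg i
      split_ifs with hc
      · have h1 : (0:ℝ) ≤ (l:ℝ) + i := by exact_mod_cast hc.1
        have h2 : (l:ℝ) + i ≤ (p:ℝ) - 1 := by exact_mod_cast hc.2
        have hxm : ((l:ℝ) + i)/p ∈ Icc (0:ℝ) 1 := by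
          constructor
          · positivity
          · rw [div_le_one hp0]; linarith
        have hwb : |w (((l:ℝ) + i)/p)| ≤ B := by
          rcases (not_and_or.mp hcase) with hneg | hbig'
          · -- l < 0 : point is near 0
            have hlneg : (l:ℝ) ≤ -1 := by
              have : l ≤ -1 := by omega
              exact_mod_cast this
            have hxs : ((l:ℝ) + i)/p ≤ ((n:ℝ)+1)/p := by
              rw [div_le_div_iff_of_pos_right hp0]; linarith
            calc |w (((l:ℝ) + i)/p)| ≤ M * (((l:ℝ) + i)/p) ^ (n+1) := hL _ hxm
              _ ≤ B := by
                  rw [hB]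
                  apply mul_le_mul_of_nonneg_left _ hM0
                  apply pow_le_pow_left₀ (by positivity) hxs
          · -- l + (n+1) > p - 1 : point is near 1
            have hple : (p:ℝ) ≤ (l:ℝ) + ((n:ℝ)+1) := by
              have : (p:ℤ) ≤ l + ((n:ℤ)+1) := by omega
              exact_mod_cast this
            have hxs : 1 - ((l:ℝ) + i)/p ≤ ((n:ℝ)+1)/p := by
              have heq : 1 - ((l:ℝ) + i)/p = ((p:ℝ) - ((l:ℝ)+i))/p := by
                field_simp
              rw [heq, div_le_div_iff_of_pos_right hp0]; linarith
            calc |w (((l:ℝ) + i)/p)| ≤ M * (1 - ((l:ℝ) + i)/p) ^ (n+1) := hR _ hxm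
              _ ≤ B := by
                  rw [hB]
                  apply mul_le_mul_of_nonneg_left _ hM0
                  apply pow_le_pow_left₀ (by linarith [hxm.2]) hxs
        calc |((n+1).choose i : ℝ) * (-1) ^ i * w (((l : ℝ) + i) / p)|
            = ((n+1).choose i : ℝ) * |w (((l : ℝ) + i) / p)| := by
              rw [abs_mul, abs_mul, abs_pow, abs_neg, abs_one, one_pow, mul_one, Nat.abs_cast]
          _ ≤ ((n+1).choose i : ℝ) * B :=
              mul_le_mul_of_nonneg_left hwb (Nat.cast_nonneg _)
      · simp only [abs_zero]
        positivity
end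

section
/- Let K ≥ 0 be an integer, w(x) = x^K (1-x)^K, and for p > 2K define γ_p = p^{-1}(6 ∑_{l=-K}^{p-1} α_{l,p}² - 8 ∑_{l=p-K}^{p-1} α_{l,p} α_{l-p,p}), where α_{l,p} = ∑_{i=max(0,-l)}^{min(K,p-1-l)} C(K,i) (-1)^i w((l+i)/p). Then there exist constants 0 < c_- < c_+ and p_0 such that c_- p^{-2K} ≤ γ_p ≤ c_+ p^{-2K} for all p ≥ p_0. -/
/-- Normalized variance of the pre-averaged second-order noise differences. -/
noncomputable def gammaP (K : ℕ) (w : ℝ → ℝ) (p : ℕ) : ℝ :=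
  (p : ℝ)⁻¹ *
    (6 * ∑ l ∈ Finset.Icc (-(K : ℤ)) ((p : ℤ) - 1), (alphaLP K w l p) ^ 2
      - 8 * ∑ l ∈ Finset.Icc ((p : ℤ) - K) ((p : ℤ) - 1),
          alphaLP K w l p * alphaLP K w (l - p) p)



open Finset
open scoped fwdDiff

notation "SM" => ((⊤ : ℕ∞) : WithTop ℕ∞)

namespace GammaAux

/-- K-th iterated forward difference has derivative the difference of the derivative. -/
lemma hasDerivAt_fwdDiff_iter (h : ℝ) (K : ℕ) :
    ∀ g : ℝ → ℝ, ContDiff ℝ SM g → ∀ x : ℝ,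
      HasDerivAt ((fwdDiff h)^[K] g) ((fwdDiff h)^[K] (deriv g) x) x := by
  induction K with
  | zero =>
    intro g hg x
    simpa using ((hg.differentiable (by norm_num)) x).hasDerivAt
  | succ K ih =>
    intro g hg x
    have hΔeq : fwdDiff h g = fun y => g (y + h) - g y := rfl
    have hΔ : ContDiff ℝ SM (fwdDiff h g) := by
      rw [hΔeq]
      exact (hg.comp (contDiff_id.add contDiff_const)).sub hg
    have hder : deriv (fwdDiff h g) = fwdDiff h (deriv g) := by
      funext t
      have h1 : DifferentiableAt ℝ (fun y : ℝ => g (y + h)) t :=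
        (((hg.differentiable (by norm_num)).comp
          ((differentiable_id).add_const h)) t)
      have h2 : DifferentiableAt ℝ g t := (hg.differentiable (by norm_num)) t
      rw [hΔeq, deriv_fun_sub h1 h2, deriv_comp_add_const]
      rfl
    rw [Function.iterate_succ_apply, Function.iterate_succ_apply, ← hder]
    exact ih (fwdDiff h g) hΔ x

/-- Two-sided mean-value bound for iterated forward differences. -/
lemma fwdDiff_iter_bound {h : ℝ} (hh : 0 < h) (K : ℕ) :
    ∀ g : ℝ → ℝ, ContDiff ℝ SM g → ∀ x m M : ℝ,
      (∀ t ∈ Set.Icc x (x + K * h), m ≤ iteratedDeriv K g t ∧ iteratedDeriv K g t ≤ M) →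
      m * h ^ K ≤ (fwdDiff h)^[K] g x ∧ (fwdDiff h)^[K] g x ≤ M * h ^ K := by
  induction K with
  | zero =>
    intro g hg x m M hb
    have hx : x ∈ Set.Icc x (x + (0:ℕ) * h) := by
      constructor <;> simp
    have := hb x hx
    simpa using this
  | succ K ih =>
    intro g hg x m M hb
    have hdF : ∀ t, HasDerivAt ((fwdDiff h)^[K] g) ((fwdDiff h)^[K] (deriv g) t) t :=
      hasDerivAt_fwdDiff_iter h K g hg
    have hcont : ContinuousOn ((fwdDiff h)^[K] g) (Set.Icc x (x + h)) :=
      fun t _ => ((hdF t).differentiableAt.continuousAt).continuousWithinAt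
    have hdiff : DifferentiableOn ℝ ((fwdDiff h)^[K] g) (Set.Ioo x (x + h)) :=
      fun t _ => ((hdF t).differentiableAt).differentiableWithinAt
    obtain ⟨ξ, hξ, hslope⟩ := exists_deriv_eq_slope ((fwdDiff h)^[K] g) (by linarith) hcont hdiff
    have hderivξ : deriv ((fwdDiff h)^[K] g) ξ = (fwdDiff h)^[K] (deriv g) ξ := (hdF ξ).deriv
    have key : (fwdDiff h)^[K+1] g x = h * (fwdDiff h)^[K] (deriv g) ξ := by
      rw [Function.iterate_succ_apply']
      have h0 : fwdDiff h ((fwdDiff h)^[K] g) x = (fwdDiff h)^[K] g (x + h) - (fwdDiff h)^[K] g x := rfl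
      rw [h0]
      rw [hderivξ] at hslope
      have hne : x + h - x ≠ 0 := by linarith
      field_simp at hslope
      linarith [hslope]
    have hg' : ContDiff ℝ SM (deriv g) := (contDiff_infty_iff_deriv.mp hg).2
    have hsub : ∀ t ∈ Set.Icc ξ (ξ + K * h),
        m ≤ iteratedDeriv K (deriv g) t ∧ iteratedDeriv K (deriv g) t ≤ M := by
      intro t ht
      have ht' : t ∈ Set.Icc x (x + (K+1 : ℕ) * h) := by
        obtain ⟨h1, h2⟩ := ht
        obtain ⟨h3, h4⟩ := hξ
        constructor
        · linarith
        · push_cast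
          push_cast at h2
          linarith
      have := hb t ht'
      rwa [iteratedDeriv_succ'] at this
    obtain ⟨hl, hr⟩ := ih (deriv g) hg' ξ m M hsub
    rw [key]
    constructor
    · calc m * h ^ (K+1) = h * (m * h ^ K) := by ring
      _ ≤ h * ((fwdDiff h)^[K] (deriv g) ξ) := by
          exact mul_le_mul_of_nonneg_left hl hh.le
    · calc h * ((fwdDiff h)^[K] (deriv g) ξ) ≤ h * (M * h ^ K) :=
          mul_le_mul_of_nonneg_left hr hh.le
      _ = M * h ^ (K+1) := by ring

lemma iteratedDeriv_pow_self (K : ℕ) :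
    iteratedDeriv K (fun x : ℝ => x ^ K) = fun _ => (K.factorial : ℝ) := by
  induction K with
  | zero => funext x; simp
  | succ K ih =>
    have hd : deriv (fun x : ℝ => x ^ (K+1)) = fun x : ℝ => ((K:ℝ)+1) * x ^ K := by
      funext x
      simp [deriv_pow]
    rw [iteratedDeriv_succ', hd]
    funext x
    rw [show (fun x : ℝ => ((K:ℝ)+1) * x ^ K) = fun x : ℝ => ((K:ℝ)+1) * (fun y : ℝ => y ^ K) x from rfl]
    rw [← iteratedDerivWithin_univ,
      iteratedDerivWithin_const_mul (Set.mem_univ x) uniqueDiffOn_univ ((K:ℝ)+1)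
        (by exact (contDiff_id.pow K).contDiffWithinAt :
          ContDiffWithinAt ℝ K (fun y : ℝ => y ^ K) Set.univ x),
      iteratedDerivWithin_univ, ih]
    simp [Nat.factorial_succ]


lemma neg_one_pow_K_sub {K k : ℕ} (hk : k ≤ K) : (-1:ℝ)^K * (-1:ℝ)^(K-k) = (-1)^k := by
  have h2 : (-1:ℝ)^(K-k) * (-1:ℝ)^k = (-1)^K := pow_sub_mul_pow (-1:ℝ) hk
  have h3 : ((-1:ℝ)^(K-k))^2 = 1 := by
    rw [← pow_mul, mul_comm, pow_mul]
    simp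
  calc (-1:ℝ)^K * (-1:ℝ)^(K-k) = ((-1:ℝ)^(K-k) * (-1:ℝ)^k) * (-1:ℝ)^(K-k) := by rw [h2]
    _ = ((-1:ℝ)^(K-k))^2 * (-1:ℝ)^k := by ring
    _ = (-1:ℝ)^k := by rw [h3, one_mul]

lemma neg_one_pow_mul_fwdDiff (g : ℝ → ℝ) (h : ℝ) (K : ℕ) (y : ℝ) :
    (-1:ℝ)^K * (fwdDiff h)^[K] g y
      = ∑ k ∈ range (K+1), (K.choose k : ℝ) * (-1)^k * g (y + k * h) := by
  rw [fwdDiff_iter_eq_sum_shift, Finset.mul_sum]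
  refine Finset.sum_congr rfl fun k hk => ?_
  have hkK : k ≤ K := Nat.lt_succ_iff.mp (Finset.mem_range.mp hk)
  have h4 := neg_one_pow_K_sub hkK
  have hsm : (k : ℕ) • h = (k:ℝ) * h := nsmul_eq_mul k h
  rw [zsmul_eq_mul, hsm]
  push_cast
  linear_combination ((K.choose k : ℝ) * g (y + k * h)) * h4

lemma alt_sum_choose_pow (K : ℕ) (x : ℝ) :
    ∑ i ∈ range (K+1), (K.choose i : ℝ) * (-1)^i * (x - i)^K = (K.factorial : ℝ) := by
  have hbound : ∀ t ∈ Set.Icc (x - K) ((x - K) + K * 1),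
      (K.factorial:ℝ) ≤ iteratedDeriv K (fun t:ℝ => t^K) t ∧
        iteratedDeriv K (fun t:ℝ => t^K) t ≤ K.factorial := by
    intro t _
    rw [iteratedDeriv_pow_self]
    exact ⟨le_rfl, le_rfl⟩
  have hb := fwdDiff_iter_bound one_pos K (fun t : ℝ => t ^ K)
      (by exact contDiff_id.pow K) (x - K) _ _ hbound
  have h2 : (fwdDiff (1:ℝ))^[K] (fun t : ℝ => t ^ K) (x - K) = (K.factorial : ℝ) := by
    have h1 := hb.1
    have h2 := hb.2
    simp only [one_pow, mul_one] at h1 h2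
    linarith
  have h3 := neg_one_pow_mul_fwdDiff (fun t : ℝ => t ^ K) 1 K (x - K)
  rw [h2] at h3
  have h6 : ((-1:ℝ)^K)^2 = 1 := by rw [← pow_mul, mul_comm, pow_mul]; simp
  rw [← Finset.sum_range_reflect]
  have hstep : ∀ j ∈ range (K+1),
      (K.choose (K+1-1-j) : ℝ) * (-1:ℝ)^(K+1-1-j) * (x - (K+1-1-j : ℕ))^K
        = (-1:ℝ)^K * ((K.choose j : ℝ) * (-1:ℝ)^j * ((x - K) + (j:ℝ) * 1)^K) := by
    intro j hj
    have hjK : j ≤ K := Nat.lt_succ_iff.mp (mem_range.mp hj)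
    have e1 : K + 1 - 1 - j = K - j := by omega
    rw [e1, Nat.choose_symm hjK]
    have e2 : ((K - j : ℕ) : ℝ) = (K : ℝ) - j := by
      push_cast [Nat.cast_sub hjK]
      ring
    rw [e2]
    have e3 : (x - ((K:ℝ) - j))^K = ((x - K) + (j:ℝ)*1)^K := by ring_nf
    rw [e3]
    have h4 : (-1:ℝ)^K * (-1:ℝ)^(K - j) = (-1)^j := neg_one_pow_K_sub hjK
    linear_combination ((K.choose j : ℝ) * ((x - K) + (j:ℝ)*1)^K * (-1:ℝ)^K) * h4
      - ((K.choose j : ℝ) * ((x - K) + (j:ℝ)*1)^K * (-1:ℝ)^(K-j)) * h6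
  rw [Finset.sum_congr rfl hstep, ← Finset.mul_sum, ← h3, ← mul_assoc]
  rw [show (-1:ℝ)^K * (-1:ℝ)^K = ((-1:ℝ)^K)^2 by ring, h6, one_mul]
end GammaAux

namespace GammaAux
def wfun (K : ℕ) : ℝ → ℝ := fun x => x ^ K * (1 - x) ^ K

lemma wfun_contDiff (K : ℕ) : ContDiff ℝ SM (wfun K) := by
  unfold wfun
  exact (contDiff_id.pow K).mul ((contDiff_const.sub contDiff_id).pow K)

lemma wfun_nonneg (K : ℕ) {x : ℝ} (h0 : 0 ≤ x) (h1 : x ≤ 1) : 0 ≤ wfun K x :=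
  mul_nonneg (pow_nonneg h0 K) (pow_nonneg (by linarith) K)

lemma wfun_le_pow_left (K : ℕ) {x c : ℝ} (h0 : 0 ≤ x) (h1 : x ≤ 1) (hc : x ≤ c) :
    wfun K x ≤ c ^ K := by
  have h2 : (1 - x)^K ≤ 1 := pow_le_one₀ (by linarith) (by linarith)
  calc x^K * (1-x)^K ≤ x^K * 1 := mul_le_mul_of_nonneg_left h2 (pow_nonneg h0 K)
    _ = x^K := mul_one _
    _ ≤ c^K := pow_le_pow_left₀ h0 hc K

lemma wfun_le_pow_right (K : ℕ) {x c : ℝ} (h0 : 0 ≤ x) (h1 : x ≤ 1) (hc : 1 - x ≤ c) :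
    wfun K x ≤ c ^ K := by
  have h2 : x^K ≤ 1 := pow_le_one₀ h0 h1
  calc x^K * (1-x)^K ≤ 1 * (1-x)^K :=
        mul_le_mul_of_nonneg_right h2 (pow_nonneg (by linarith) K)
    _ = (1-x)^K := one_mul _
    _ ≤ c^K := pow_le_pow_left₀ (by linarith) hc K

lemma wfun_ge (K : ℕ) {x : ℝ} (h0 : 1/4 ≤ x) (h1 : x ≤ 3/4) :
    ((16:ℝ)⁻¹)^K ≤ wfun K x := by
  have e : ((16:ℝ)⁻¹)^K = (4⁻¹:ℝ)^K * (4⁻¹:ℝ)^K := by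
    rw [← mul_pow]; norm_num
  rw [e]
  have h2 : (4⁻¹:ℝ)^K ≤ x^K := pow_le_pow_left₀ (by norm_num) (by linarith) K
  have h3 : (4⁻¹:ℝ)^K ≤ (1-x)^K := pow_le_pow_left₀ (by norm_num) (by linarith) K
  exact mul_le_mul h2 h3 (by positivity) (pow_nonneg (by linarith) K)

lemma alpha_abs_le_of_bound (K p : ℕ) (l : ℤ) (B : ℝ) (hB : 0 ≤ B)
    (hb : ∀ i : ℕ, i ≤ K → 0 ≤ l + (i:ℤ) → l + (i:ℤ) ≤ (p:ℤ) - 1 →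
      |wfun K (((l:ℝ) + i) / p)| ≤ B) :
    |alphaLP K (wfun K) l p| ≤ 2 ^ K * B := by
  rw [alphaLP]
  refine (Finset.abs_sum_le_sum_abs _ _).trans ?_
  have hterm : ∀ i ∈ range (K+1),
      |if 0 ≤ l + (i:ℤ) ∧ l + (i:ℤ) ≤ (p:ℤ) - 1 then
        (K.choose i : ℝ) * (-1)^i * wfun K (((l:ℝ)+i)/p) else 0| ≤ (K.choose i : ℝ) * B := by
    intro i hi
    have hiK : i ≤ K := Nat.lt_succ_iff.mp (mem_range.mp hi)
    by_cases hc : 0 ≤ l + (i:ℤ) ∧ l + (i:ℤ) ≤ (p:ℤ) - 1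
    · rw [if_pos hc, abs_mul, abs_mul, abs_pow, abs_neg, abs_one, one_pow, mul_one,
        Nat.abs_cast]
      exact mul_le_mul_of_nonneg_left (hb i hiK hc.1 hc.2) (Nat.cast_nonneg _)
    · rw [if_neg hc, abs_zero]
      positivity
  refine (Finset.sum_le_sum hterm).trans ?_
  rw [← Finset.sum_mul]
  have hs : (∑ i ∈ range (K+1), (K.choose i : ℝ)) = 2^K := by
    rw [← Nat.cast_sum, Nat.sum_range_choose]
    push_cast
    ring
  rw [hs]

lemma alpha_abs_left (K p : ℕ) (hp : K + 1 ≤ p) {l : ℤ} (hl2 : l ≤ -1) :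
    |alphaLP K (wfun K) l p| ≤ 2^K * ((K:ℝ)/p)^K := by
  have hp0 : (0:ℝ) < p := by
    have : 0 < p := by omega
    exact_mod_cast this
  apply alpha_abs_le_of_bound K p l _ (by positivity)
  intro i hi h0 h1
  have harg0 : (0:ℝ) ≤ (l:ℝ) + i := by exact_mod_cast h0
  have hargK : (l:ℝ) + i ≤ (K:ℝ) := by
    have : l + (i:ℤ) ≤ (K:ℤ) := by omega
    exact_mod_cast this
  have hx0 : 0 ≤ ((l:ℝ)+i)/p := div_nonneg harg0 hp0.le
  have hxc : ((l:ℝ)+i)/p ≤ (K:ℝ)/p := by gcongr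
  have hK1 : (K:ℝ)/p ≤ 1 := by
    rw [div_le_one hp0]
    exact_mod_cast (by omega : K ≤ p)
  have hx1 : ((l:ℝ)+i)/p ≤ 1 := le_trans hxc hK1
  rw [abs_of_nonneg (wfun_nonneg K hx0 hx1)]
  exact wfun_le_pow_left K hx0 hx1 hxc

lemma alpha_abs_right (K p : ℕ) (hp : K + 1 ≤ p) {l : ℤ} (hl1 : (p:ℤ) - K ≤ l) :
    |alphaLP K (wfun K) l p| ≤ 2^K * ((K:ℝ)/p)^K := by
  have hp0 : (0:ℝ) < p := by
    have : 0 < p := by omega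
    exact_mod_cast this
  apply alpha_abs_le_of_bound K p l _ (by positivity)
  intro i hi h0 h1
  have harg0 : (0:ℝ) ≤ (l:ℝ) + i := by exact_mod_cast h0
  have hargp : (l:ℝ) + i ≤ (p:ℝ) := by
    have : l + (i:ℤ) ≤ (p:ℤ) := by omega
    exact_mod_cast this
  have hx0 : 0 ≤ ((l:ℝ)+i)/p := div_nonneg harg0 hp0.le
  have hx1 : ((l:ℝ)+i)/p ≤ 1 := by
    rw [div_le_one hp0]
    exact hargp
  have h5 : (p:ℝ) - ((l:ℝ)+i) ≤ (K:ℝ) := by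
    have h6 : (p:ℤ) - (l+(i:ℤ)) ≤ (K:ℤ) := by omega
    exact_mod_cast h6
  have hc : 1 - ((l:ℝ)+i)/p ≤ (K:ℝ)/p := by
    have hone : (1:ℝ) = (p:ℝ)/p := (div_self hp0.ne').symm
    rw [hone, div_sub_div_same]
    gcongr
  rw [abs_of_nonneg (wfun_nonneg K hx0 hx1)]
  exact wfun_le_pow_right K hx0 hx1 hc
lemma alpha_interior (K p : ℕ) (hp : 0 < p) {l : ℤ} (h0 : 0 ≤ l) (h1 : l + K ≤ (p:ℤ) - 1) :
    alphaLP K (wfun K) l p = (-1:ℝ)^K * (fwdDiff ((p:ℝ)⁻¹))^[K] (wfun K) ((l:ℝ)/p) := by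
  have hp0 : (0:ℝ) < p := by exact_mod_cast hp
  rw [neg_one_pow_mul_fwdDiff, alphaLP]
  refine Finset.sum_congr rfl fun i hi => ?_
  have hiK : i ≤ K := Nat.lt_succ_iff.mp (mem_range.mp hi)
  have hc : 0 ≤ l + (i:ℤ) ∧ l + (i:ℤ) ≤ (p:ℤ) - 1 := ⟨by omega, by omega⟩
  rw [if_pos hc]
  have harg : (l:ℝ)/p + (i:ℝ) * (p:ℝ)⁻¹ = ((l:ℝ) + i)/p := by
    field_simp
  rw [harg]

lemma alpha_interior_abs_le (K p : ℕ) (hp : 0 < p) (Mw : ℝ)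
    (hM : ∀ t ∈ Set.Icc (0:ℝ) 1, |iteratedDeriv K (wfun K) t| ≤ Mw)
    {l : ℤ} (h0 : 0 ≤ l) (h1 : l + K ≤ (p:ℤ) - 1) :
    |alphaLP K (wfun K) l p| ≤ Mw * ((p:ℝ)^K)⁻¹ := by
  have hp0 : (0:ℝ) < p := by exact_mod_cast hp
  have hh : (0:ℝ) < (p:ℝ)⁻¹ := inv_pos.mpr hp0
  have hincl : ∀ t ∈ Set.Icc ((l:ℝ)/p) ((l:ℝ)/p + K * (p:ℝ)⁻¹),
      -Mw ≤ iteratedDeriv K (wfun K) t ∧ iteratedDeriv K (wfun K) t ≤ Mw := by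
    intro t ht
    obtain ⟨ha, hb'⟩ := ht
    have hl0 : (0:ℝ) ≤ (l:ℝ)/p := div_nonneg (by exact_mod_cast h0) hp0.le
    have hcast : (l:ℝ) + K ≤ (p:ℝ) - 1 := by exact_mod_cast h1
    have h2 : (l:ℝ)/p + K * (p:ℝ)⁻¹ ≤ 1 := by
      rw [inv_eq_one_div, mul_one_div, ← add_div, div_le_one hp0]
      linarith
    have hsub : t ∈ Set.Icc (0:ℝ) 1 := ⟨by linarith, by linarith⟩
    exact abs_le.mp (hM t hsub)
  have hb := fwdDiff_iter_bound hh K (wfun K) (wfun_contDiff K) ((l:ℝ)/p) (-Mw) Mw hincl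
  rw [alpha_interior K p hp h0 h1, abs_mul, abs_pow, abs_neg, abs_one, one_pow, one_mul]
  rw [abs_le]
  constructor
  · calc -(Mw * ((p:ℝ)^K)⁻¹) = (-Mw) * ((p:ℝ)⁻¹)^K := by rw [inv_pow]; ring
      _ ≤ _ := hb.1
  · calc (fwdDiff ((p:ℝ)⁻¹))^[K] (wfun K) ((l:ℝ)/p) ≤ Mw * ((p:ℝ)⁻¹)^K := hb.2
      _ = Mw * ((p:ℝ)^K)⁻¹ := by rw [inv_pow]

lemma sum_alpha_mul_pow (K p : ℕ) (hp : 1 ≤ p) :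
    ∑ l ∈ Finset.Icc (-(K:ℤ)) ((p:ℤ)-1), alphaLP K (wfun K) l p * ((l:ℝ))^K
      = (K.factorial : ℝ) * ∑ m ∈ Finset.Icc (0:ℤ) ((p:ℤ)-1), wfun K ((m:ℝ)/p) := by
  have step1 : ∀ l : ℤ, alphaLP K (wfun K) l p * ((l:ℝ))^K
      = ∑ i ∈ range (K+1), (if 0 ≤ l + (i:ℤ) ∧ l + (i:ℤ) ≤ (p:ℤ)-1 then
          (K.choose i : ℝ) * (-1)^i * wfun K (((l:ℝ)+i)/p) * ((l:ℝ))^K else 0) := by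
    intro l
    rw [alphaLP, Finset.sum_mul]
    refine Finset.sum_congr rfl fun i _ => ?_
    rw [ite_mul, zero_mul]
  simp_rw [step1]
  rw [Finset.sum_comm]
  have step2 : ∀ i ∈ range (K+1),
      (∑ l ∈ Finset.Icc (-(K:ℤ)) ((p:ℤ)-1), if 0 ≤ l + (i:ℤ) ∧ l + (i:ℤ) ≤ (p:ℤ)-1 then
        (K.choose i : ℝ) * (-1)^i * wfun K (((l:ℝ)+i)/p) * ((l:ℝ))^K else 0)
      = ∑ m ∈ Finset.Icc (0:ℤ) ((p:ℤ)-1),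
          (K.choose i : ℝ) * (-1)^i * wfun K ((m:ℝ)/p) * ((m:ℝ) - i)^K := by
    intro i hi
    have hiK : i ≤ K := Nat.lt_succ_iff.mp (mem_range.mp hi)
    have hsub : Finset.Icc (-(i:ℤ)) ((p:ℤ)-1-i) ⊆ Finset.Icc (-(K:ℤ)) ((p:ℤ)-1) := by
      intro x hx
      rw [Finset.mem_Icc] at *
      omega
    rw [← Finset.sum_subset hsub (by
      intro x hx hnx
      rw [Finset.mem_Icc] at hx
      rw [Finset.mem_Icc] at hnx
      apply if_neg
      intro hcond
      exact hnx ⟨by omega, by omega⟩)]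
    have hco : ∀ l ∈ Finset.Icc (-(i:ℤ)) ((p:ℤ)-1-i),
        (if 0 ≤ l + (i:ℤ) ∧ l + (i:ℤ) ≤ (p:ℤ)-1 then
          (K.choose i : ℝ) * (-1)^i * wfun K (((l:ℝ)+i)/p) * ((l:ℝ))^K else 0)
        = (K.choose i : ℝ) * (-1)^i * wfun K (((l:ℝ)+i)/p) * ((l:ℝ))^K := by
      intro l hl
      rw [Finset.mem_Icc] at hl
      exact if_pos ⟨by omega, by omega⟩
    rw [Finset.sum_congr rfl hco]
    have hmap := Finset.sum_map (Finset.Icc (-(i:ℤ)) ((p:ℤ)-1-i)) (addRightEmbedding (i:ℤ))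
        (fun m : ℤ => (K.choose i : ℝ) * (-1)^i * wfun K ((m:ℝ)/p) * ((m:ℝ) - i)^K)
    rw [map_add_right_Icc, show -(i:ℤ) + i = 0 by ring, show (p:ℤ)-1-i+i = (p:ℤ)-1 by ring]
        at hmap
    rw [hmap]
    refine Finset.sum_congr rfl fun l hl => ?_
    simp only [addRightEmbedding_apply]
    push_cast
    ring_nf
  rw [Finset.sum_congr rfl step2, Finset.sum_comm, Finset.mul_sum]
  refine Finset.sum_congr rfl fun m hm => ?_
  have hfac : ∑ i ∈ range (K+1), (K.choose i:ℝ)*(-1)^i*wfun K ((m:ℝ)/p)*((m:ℝ)-i)^K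
      = (∑ i ∈ range (K+1), (K.choose i:ℝ)*(-1)^i*((m:ℝ)-i)^K) * wfun K ((m:ℝ)/p) := by
    rw [Finset.sum_mul]
    exact Finset.sum_congr rfl fun i _ => by ring
  rw [hfac, alt_sum_choose_pow]
end GammaAux

set_option maxHeartbeats 1000000 in
open Finset GammaAux in
theorem gammaP_two_sided_bound (K : ℕ) :
    ∃ cm cp : ℝ, ∃ p0 : ℕ, 0 < cm ∧ cm < cp ∧ 2 * K < p0 ∧
      ∀ p : ℕ, p0 ≤ p →
        cm * ((p : ℝ) ^ (2 * K))⁻¹ ≤ gammaP K (fun x => x ^ K * (1 - x) ^ K) p ∧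
        gammaP K (fun x => x ^ K * (1 - x) ^ K) p ≤ cp * ((p : ℝ) ^ (2 * K))⁻¹ := by
  classical
  set w : ℝ → ℝ := fun x => x ^ K * (1 - x) ^ K with hwdef
  have hwf : w = GammaAux.wfun K := rfl
  obtain ⟨Mw0, hMw0⟩ := (isCompact_Icc (a := (0:ℝ)) (b := 1)).exists_bound_of_continuousOn
      (((GammaAux.wfun_contDiff K).continuous_iteratedDeriv K (by exact_mod_cast le_top)).continuousOn)
  set Mw := max Mw0 0 with hMwdef
  have hMw : ∀ t ∈ Set.Icc (0:ℝ) 1, |iteratedDeriv K (GammaAux.wfun K) t| ≤ Mw := by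
    intro t ht
    have h := hMw0 t ht
    rw [Real.norm_eq_abs] at h
    exact h.trans (le_max_left _ _)
  have hMwnn : 0 ≤ Mw := le_max_right _ _
  have hfacpos : (0:ℝ) < (K.factorial : ℝ) := by exact_mod_cast K.factorial_pos
  set C6 : ℝ := max Mw (2^K * (K:ℝ)^K) with hC6def
  have hC6nn : 0 ≤ C6 := le_trans hMwnn (le_max_left _ _)
  set c1 : ℝ := (K.factorial : ℝ)^2 * ((16:ℝ)⁻¹)^(2*K) / 32 with hc1def
  have hc1pos : 0 < c1 := by
    rw [hc1def]
    apply div_pos (mul_pos (pow_pos hfacpos 2) (pow_pos (by norm_num) _)) (by norm_num)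
  set c3 : ℝ := (K:ℝ) * 4^K * (K:ℝ)^(2*K) with hc3def
  have hc3nn : 0 ≤ c3 := by rw [hc3def]; positivity
  set cm := 3 * c1 with hcmdef
  have hcmpos : 0 < cm := by rw [hcmdef]; linarith
  set cp := 12 * C6^2 + 8 * c3 + cm + 1 with hcpdef
  set p0 := max (2*K+2) (max 6 (Nat.ceil (8*c3/cm) + 1)) with hp0def
  refine ⟨cm, cp, p0, hcmpos, ?_, ?_, ?_⟩
  · rw [hcpdef]
    nlinarith [sq_nonneg C6, hc3nn]
  · have h := le_max_left (2*K+2) (max 6 (Nat.ceil (8*c3/cm) + 1))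
    rw [← hp0def] at h
    omega
  intro p hp
  have hp2K : 2*K+2 ≤ p := le_trans (le_max_left _ _) hp
  have hp6 : 6 ≤ p := le_trans (le_trans (le_max_left _ _) (le_max_right _ _)) hp
  have hpceil : Nat.ceil (8*c3/cm) + 1 ≤ p :=
    le_trans (le_trans (le_max_right _ _) (le_max_right _ _)) hp
  have hppos : 0 < p := by omega
  have hp0R : (0:ℝ) < p := by exact_mod_cast hppos
  have hp1R : (1:ℝ) ≤ p := by exact_mod_cast (by omega : 1 ≤ p)
  have hpKR : (0:ℝ) < (p:ℝ)^K := by positivity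
  have hp2KR : (0:ℝ) < (p:ℝ)^(2*K) := by positivity
  have hXinv : (0:ℝ) < ((p:ℝ)^(2*K))⁻¹ := by positivity
  have hKpR : (K:ℝ) ≤ p := by exact_mod_cast (by omega : K ≤ p)
  have hcdiv : 8*c3 ≤ cm * p := by
    have h1 : (8*c3/cm : ℝ) ≤ (Nat.ceil (8*c3/cm) : ℝ) := Nat.le_ceil _
    have h2 : ((Nat.ceil (8*c3/cm) : ℕ) : ℝ) ≤ p := by
      exact_mod_cast (by omega : Nat.ceil (8*c3/cm) ≤ p)
    rw [div_le_iff₀ hcmpos] at h1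
    calc 8*c3 ≤ (Nat.ceil (8*c3/cm):ℝ) * cm := h1
      _ ≤ (p:ℝ) * cm := mul_le_mul_of_nonneg_right h2 hcmpos.le
      _ = cm * p := mul_comm _ _
  set A1 := ∑ l ∈ Finset.Icc (-(K : ℤ)) ((p : ℤ) - 1), (alphaLP K w l p) ^ 2 with hA1def
  set A2 := ∑ l ∈ Finset.Icc ((p:ℤ) - K) ((p:ℤ) - 1),
      alphaLP K w l p * alphaLP K w (l - p) p with hA2def
  have hgamma : gammaP K w p = (p:ℝ)⁻¹ * (6 * A1 - 8 * A2) := by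
    rw [hA1def, hA2def]; rfl
  -- pointwise bound
  have hpoint : ∀ l ∈ Finset.Icc (-(K:ℤ)) ((p:ℤ)-1),
      |alphaLP K w l p| ≤ C6 * ((p:ℝ)^K)⁻¹ := by
    intro l hl
    rw [Finset.mem_Icc] at hl
    have hb2 : (2:ℝ)^K * ((K:ℝ)/p)^K ≤ C6 * ((p:ℝ)^K)⁻¹ := by
      rw [div_pow]
      have e : (2:ℝ)^K * ((K:ℝ)^K / (p:ℝ)^K) = (2^K * (K:ℝ)^K) * ((p:ℝ)^K)⁻¹ := by
        field_simp
      rw [e]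
      exact mul_le_mul_of_nonneg_right (le_max_right _ _) (by positivity)
    rw [hwf]
    rcases lt_or_ge l 0 with hneg | hpos
    · exact (GammaAux.alpha_abs_left K p (by omega) (by omega)).trans hb2
    rcases le_or_gt ((p:ℤ) - K) l with hbig | hsm
    · exact (GammaAux.alpha_abs_right K p (by omega) hbig).trans hb2
    · have h := GammaAux.alpha_interior_abs_le K p hppos Mw hMw hpos (by omega)
      exact h.trans (mul_le_mul_of_nonneg_right (le_max_left _ _) (by positivity))
  have hcard1 : (Finset.Icc (-(K:ℤ)) ((p:ℤ)-1)).card = p + K := by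
    rw [Int.card_Icc]
    omega
  -- A1 upper bound
  have hA1nn : 0 ≤ A1 := by
    rw [hA1def]
    exact Finset.sum_nonneg fun l _ => sq_nonneg _
  have hpk2 : ((p:ℝ)^K)^2 = (p:ℝ)^(2*K) := by rw [← pow_mul, Nat.mul_comm]
  have hA1up : A1 ≤ 2*(p:ℝ) * (C6^2 * ((p:ℝ)^(2*K))⁻¹) := by
    rw [hA1def]
    have hterm : ∀ l ∈ Finset.Icc (-(K:ℤ)) ((p:ℤ)-1),
        (alphaLP K w l p)^2 ≤ C6^2 * ((p:ℝ)^(2*K))⁻¹ := by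
      intro l hl
      have h := hpoint l hl
      have h2 : |alphaLP K w l p|^2 ≤ (C6 * ((p:ℝ)^K)⁻¹)^2 :=
        pow_le_pow_left₀ (abs_nonneg _) h 2
      rw [sq_abs] at h2
      refine h2.trans (le_of_eq ?_)
      rw [mul_pow, ← inv_pow, ← inv_pow, ← pow_mul, Nat.mul_comm]
    refine (Finset.sum_le_sum hterm).trans ?_
    rw [Finset.sum_const, hcard1, nsmul_eq_mul]
    have : ((p + K : ℕ) : ℝ) ≤ 2*(p:ℝ) := by push_cast; linarith
    exact mul_le_mul_of_nonneg_right this (by positivity)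
  -- A2 bound
  have hA2abs : |A2| ≤ c3 * ((p:ℝ)^(2*K))⁻¹ := by
    rw [hA2def]
    refine (Finset.abs_sum_le_sum_abs _ _).trans ?_
    have hterm : ∀ l ∈ Finset.Icc ((p:ℤ)-K) ((p:ℤ)-1),
        |alphaLP K w l p * alphaLP K w (l - p) p|
          ≤ ((4:ℝ)^K * (K:ℝ)^(2*K)) * ((p:ℝ)^(2*K))⁻¹ := by
      intro l hl
      rw [Finset.mem_Icc] at hl
      rw [abs_mul, hwf]
      have h1 := GammaAux.alpha_abs_right K p (by omega) hl.1
      have h2 := GammaAux.alpha_abs_left K p (by omega) (l := l - p) (by omega)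
      have hBnn : (0:ℝ) ≤ 2^K * ((K:ℝ)/p)^K := by positivity
      calc |alphaLP K (GammaAux.wfun K) l p| * |alphaLP K (GammaAux.wfun K) (l-p) p|
          ≤ (2^K * ((K:ℝ)/p)^K) * (2^K * ((K:ℝ)/p)^K) :=
            mul_le_mul h1 h2 (abs_nonneg _) hBnn
        _ = ((4:ℝ)^K * (K:ℝ)^(2*K)) * ((p:ℝ)^(2*K))⁻¹ := by
            have e4 : (4:ℝ)^K = 2^K * 2^K := by rw [← mul_pow]; norm_num
            have eK : (K:ℝ)^(2*K) = (K:ℝ)^K * (K:ℝ)^K := by rw [two_mul, pow_add]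
            have ep : ((p:ℝ)^(2*K))⁻¹ = ((p:ℝ)^K)⁻¹ * ((p:ℝ)^K)⁻¹ := by
              rw [two_mul, pow_add, mul_inv]
            rw [div_pow, e4, eK, ep, div_eq_mul_inv]
            ring
    refine (Finset.sum_le_sum hterm).trans ?_
    rw [Finset.sum_const, nsmul_eq_mul]
    have hcard2 : (Finset.Icc ((p:ℤ)-K) ((p:ℤ)-1)).card = K := by
      rw [Int.card_Icc]
      omega
    rw [hcard2]
    apply le_of_eq
    rw [hc3def]
    ring
  have hA2' := abs_le.mp hA2abs
  -- A1 lower bound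
  have hA1low : c1 * p * ((p:ℝ)^(2*K))⁻¹ ≤ A1 := by
    set S := ∑ m ∈ Finset.Icc (0:ℤ) ((p:ℤ)-1), GammaAux.wfun K ((m:ℝ)/p) with hSdef
    have hSlow : (p:ℝ)/4 * ((16:ℝ)⁻¹)^K ≤ S := by
      set n : ℕ := (p+3)/4 with hn
      have hsub : Finset.Icc (n:ℤ) (2*(n:ℤ)) ⊆ Finset.Icc (0:ℤ) ((p:ℤ)-1) := by
        intro x hx
        rw [Finset.mem_Icc] at *
        omega
      have hterm : ∀ m ∈ Finset.Icc (n:ℤ) (2*(n:ℤ)),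
          ((16:ℝ)⁻¹)^K ≤ GammaAux.wfun K ((m:ℝ)/p) := by
        intro m hm
        rw [Finset.mem_Icc] at hm
        apply GammaAux.wfun_ge
        · rw [le_div_iff₀ hp0R]
          have h3 : (p:ℤ) ≤ 4*m := by omega
          have h4 : (p:ℝ) ≤ 4*(m:ℝ) := by exact_mod_cast h3
          linarith
        · rw [div_le_iff₀ hp0R]
          have h3 : 4*m ≤ 3*(p:ℤ) := by omega
          have h4 : 4*(m:ℝ) ≤ 3*(p:ℝ) := by exact_mod_cast h3
          linarith
      have hnonneg : ∀ m ∈ Finset.Icc (0:ℤ) ((p:ℤ)-1),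
          m ∉ Finset.Icc (n:ℤ) (2*(n:ℤ)) → 0 ≤ GammaAux.wfun K ((m:ℝ)/p) := by
        intro m hm _
        rw [Finset.mem_Icc] at hm
        apply GammaAux.wfun_nonneg
        · exact div_nonneg (by exact_mod_cast hm.1) hp0R.le
        · rw [div_le_one hp0R]
          have h3 : m ≤ (p:ℤ) := by omega
          exact_mod_cast h3
      have h1 : ∑ m ∈ Finset.Icc (n:ℤ) (2*(n:ℤ)), GammaAux.wfun K ((m:ℝ)/p) ≤ S := by
        rw [hSdef]
        exact Finset.sum_le_sum_of_subset_of_nonneg hsub hnonneg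
      have h2 : ((Finset.Icc (n:ℤ) (2*(n:ℤ))).card : ℝ) * ((16:ℝ)⁻¹)^K
          ≤ ∑ m ∈ Finset.Icc (n:ℤ) (2*(n:ℤ)), GammaAux.wfun K ((m:ℝ)/p) := by
        have h3 := Finset.card_nsmul_le_sum (Finset.Icc (n:ℤ) (2*(n:ℤ))) _ _ hterm
        rwa [nsmul_eq_mul] at h3
      have hcard3 : (Finset.Icc (n:ℤ) (2*(n:ℤ))).card = n + 1 := by
        rw [Int.card_Icc]
        omega
      have hp4 : (p:ℝ)/4 ≤ ((n:ℝ)+1) := by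
        rw [div_le_iff₀ (by norm_num : (0:ℝ) < 4)]
        have h3 : (p:ℤ) ≤ (n+1)*4 := by omega
        have h4 : (p:ℝ) ≤ ((n:ℝ)+1)*4 := by exact_mod_cast h3
        linarith
      calc (p:ℝ)/4 * ((16:ℝ)⁻¹)^K ≤ ((n:ℝ)+1) * ((16:ℝ)⁻¹)^K :=
            mul_le_mul_of_nonneg_right hp4 (by positivity)
        _ = ((Finset.Icc (n:ℤ) (2*(n:ℤ))).card : ℝ) * ((16:ℝ)⁻¹)^K := by
            rw [hcard3]; push_cast; ring
        _ ≤ _ := h2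
        _ ≤ S := h1
    have hSnn : 0 ≤ S := le_trans (by positivity) hSlow
    have hid : ∑ l ∈ Finset.Icc (-(K:ℤ)) ((p:ℤ)-1), alphaLP K w l p * ((l:ℝ))^K
        = (K.factorial:ℝ) * S := by
      rw [hwf, hSdef]
      exact GammaAux.sum_alpha_mul_pow K p (by omega)
    have hCS := Finset.sum_mul_sq_le_sq_mul_sq (Finset.Icc (-(K:ℤ)) ((p:ℤ)-1))
        (fun l => alphaLP K w l p) (fun l => ((l:ℝ))^K)
    have hQ : ∑ l ∈ Finset.Icc (-(K:ℤ)) ((p:ℤ)-1), (((l:ℝ))^K)^2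
        ≤ 2*(p:ℝ) * (p:ℝ)^(2*K) := by
      have hterm : ∀ l ∈ Finset.Icc (-(K:ℤ)) ((p:ℤ)-1),
          (((l:ℝ))^K)^2 ≤ (p:ℝ)^(2*K) := by
        intro l hl
        rw [Finset.mem_Icc] at hl
        have hlb : -(p:ℝ) ≤ (l:ℝ) := by
          have : -(p:ℤ) ≤ l := by omega
          exact_mod_cast this
        have hub : (l:ℝ) ≤ (p:ℝ) := by
          have : l ≤ (p:ℤ) := by omega
          exact_mod_cast this
        have h2 : ((l:ℝ))^2 ≤ (p:ℝ)^2 := sq_le_sq' hlb hub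
        calc (((l:ℝ))^K)^2 = (((l:ℝ))^2)^K := by
              rw [← pow_mul, ← pow_mul, Nat.mul_comm]
          _ ≤ ((p:ℝ)^2)^K := pow_le_pow_left₀ (sq_nonneg _) h2 K
          _ = (p:ℝ)^(2*K) := by rw [← pow_mul]
      refine (Finset.sum_le_sum hterm).trans ?_
      rw [Finset.sum_const, hcard1, nsmul_eq_mul]
      have : ((p + K : ℕ) : ℝ) ≤ 2*(p:ℝ) := by push_cast; linarith
      exact mul_le_mul_of_nonneg_right this (by positivity)
    have hcomb : ((K.factorial:ℝ) * S)^2 ≤ A1 * (2*(p:ℝ)*(p:ℝ)^(2*K)) := by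
      rw [← hid, hA1def]
      refine hCS.trans ?_
      refine mul_le_mul_of_nonneg_left hQ ?_
      exact Finset.sum_nonneg fun l _ => sq_nonneg _
    have hKS : (K.factorial:ℝ) * ((p:ℝ)/4 * ((16:ℝ)⁻¹)^K) ≤ (K.factorial:ℝ)*S :=
      mul_le_mul_of_nonneg_left hSlow hfacpos.le
    have hsq : ((K.factorial:ℝ) * ((p:ℝ)/4 * ((16:ℝ)⁻¹)^K))^2 ≤ ((K.factorial:ℝ)*S)^2 :=
      pow_le_pow_left₀ (by positivity) hKS 2
    have e16 : (((16:ℝ)⁻¹)^K)^2 = ((16:ℝ)⁻¹)^(2*K) := by rw [← pow_mul, Nat.mul_comm]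
    have heq : ((K.factorial:ℝ) * ((p:ℝ)/4 * ((16:ℝ)⁻¹)^K))^2 = c1 * p * (2*(p:ℝ)) := by
      rw [hc1def]
      linear_combination ((K.factorial:ℝ)^2 * (p:ℝ)^2/16) * e16
    have h7 : c1 * p * (2*(p:ℝ)) ≤ A1 * (2*(p:ℝ)*(p:ℝ)^(2*K)) := by
      rw [← heq]
      exact le_trans hsq hcomb
    have h8 : c1 * p ≤ A1 * (p:ℝ)^(2*K) := by
      have h2p : (0:ℝ) < 2*(p:ℝ) := by positivity
      rw [← mul_le_mul_iff_of_pos_right h2p]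
      calc c1*(p:ℝ)*(2*(p:ℝ)) ≤ A1*(2*(p:ℝ)*(p:ℝ)^(2*K)) := h7
        _ = A1*(p:ℝ)^(2*K)*(2*(p:ℝ)) := by ring
    have e9 : c1 * (p:ℝ) * ((p:ℝ)^(2*K))⁻¹ = (c1*(p:ℝ)) / (p:ℝ)^(2*K) := by
      rw [div_eq_mul_inv]
    rw [e9, div_le_iff₀ hp2KR]
    exact h8
  -- final assembly
  rw [hgamma]
  clear_value A1 A2 w cm cp c1 c3 C6 Mw p0
  constructor
  · have hin : cm * ((p:ℝ)^(2*K))⁻¹ * p ≤ 6*A1 - 8*A2 := by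
      have hP : 0 ≤ (cm*(p:ℝ) - 8*c3) * ((p:ℝ)^(2*K))⁻¹ :=
        mul_nonneg (by linarith) hXinv.le
      rw [hcmdef] at hP ⊢
      nlinarith [hA1low, hA2'.2, hP]
    calc cm * ((p:ℝ)^(2*K))⁻¹ = (p:ℝ)⁻¹ * (cm * ((p:ℝ)^(2*K))⁻¹ * p) := by
          field_simp
      _ ≤ (p:ℝ)⁻¹ * (6*A1 - 8*A2) :=
          mul_le_mul_of_nonneg_left hin (inv_nonneg.mpr hp0R.le)
  · have hup : 6*A1 - 8*A2 ≤ cp * ((p:ℝ)^(2*K))⁻¹ * p := by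
      rw [hcpdef]
      have t1 : 0 ≤ (c3 * ((p:ℝ)^(2*K))⁻¹) * ((p:ℝ) - 1) :=
        mul_nonneg (mul_nonneg hc3nn hXinv.le) (by linarith)
      have t2 : 0 ≤ ((cm+1) * ((p:ℝ)^(2*K))⁻¹) * (p:ℝ) :=
        mul_nonneg (mul_nonneg (by linarith) hXinv.le) hp0R.le
      nlinarith [hA1up, hA2'.1, t1, t2]
    calc (p:ℝ)⁻¹ * (6*A1 - 8*A2) ≤ (p:ℝ)⁻¹ * (cp * ((p:ℝ)^(2*K))⁻¹ * p) :=
          mul_le_mul_of_nonneg_left hup (inv_nonneg.mpr hp0R.le)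
      _ = cp * ((p:ℝ)^(2*K))⁻¹ := by field_simp
end
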